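/- arXiv:1909.12351 — 4 statements merged into one kernel-verified Lean document; each statement's English description precedes it below -/
import Mathlib

section
/- For every integer k > 0, every caterpillar is k-cordial. -/
/-- The induced weight of an edge: the sum (mod `k`) of the labels of its endpoints. -/
def edgeWeight {V : Type} (k : ℕ) (f : V → ZMod k) (e : Sym2 V) : ZMod k :=
  Sym2.lift ⟨fun u v => f u + f v, fun u v => add_comm _ _⟩ e

/-- `f` is a `k`-cordial labeling of `G`: each label appears on at most one more vertex
than any other label, and each induced edge-weight appears on at most one more edge than
any other edge-weight. -/
def IsCordialLabeling {V : Type} [Fintype V] [DecidableEq V] (k : ℕ)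
    (G : SimpleGraph V) [DecidableRel G.Adj] (f : V → ZMod k) : Prop :=
  (∀ a b : ZMod k,
    ((Finset.univ.filter (fun v => f v = a)).card : ℤ) -
      ((Finset.univ.filter (fun v => f v = b)).card : ℤ) ≤ 1) ∧
  (∀ a b : ZMod k,
    ((G.edgeFinset.filter (fun e => edgeWeight k f e = a)).card : ℤ) -
      ((G.edgeFinset.filter (fun e => edgeWeight k f e = b)).card : ℤ) ≤ 1)
/-- `G` is a caterpillar: a tree having a maximum-length path `P` such that every
vertex is at distance at most one from `P`. -/
def IsCaterpillar {V : Type} [Fintype V] (G : SimpleGraph V) : Prop :=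
  G.IsTree ∧ ∃ (a b : V) (P : G.Walk a b), P.IsPath ∧
    (∀ (c d : V) (Q : G.Walk c d), Q.IsPath → Q.length ≤ P.length) ∧
    (∀ v : V, ∃ u ∈ P.support, G.dist v u ≤ 1)


namespace CatAux

-- generic idxOf-in-flatMap lemma
lemma idxOf_flatMap_range {β : Type} [DecidableEq β] (f : ℕ → List β) (m j : ℕ) (hj : j < m)
    (x : β) (hx : x ∈ f j) (hnot : ∀ i, i < m → i ≠ j → x ∉ f i) :
    ((List.range m).flatMap f).idxOf x
      = ((List.range j).map (fun i => (f i).length)).sum + (f j).idxOf x := by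
  have hm : (j + 1) + (m - (j + 1)) = m := by omega
  rw [← hm, List.range_add, List.flatMap_append]
  rw [List.idxOf_append_of_mem]
  · rw [List.range_succ, List.flatMap_append]
    have hnotj : x ∉ (List.range j).flatMap f := by
      intro hmem
      obtain ⟨i, hi, hxi⟩ := List.mem_flatMap.mp hmem
      have hi' := List.mem_range.mp hi
      exact hnot i (by omega) (by omega) hxi
    rw [List.idxOf_append_of_notMem hnotj, List.length_flatMap]
    simp [Function.comp_def]
  · rw [List.range_succ, List.flatMap_append]
    simp only [List.mem_append]
    right
    simpa using hx

end CatAux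

namespace CatCore
noncomputable section

variable {V : Type} [Fintype V] [DecidableEq V] (L : List V) (nbr : V → V) (d : V)

def sJ (j : ℕ) : V := L.getD j d
def pos (v : V) : ℕ := if v ∈ L then L.idxOf v else L.idxOf (nbr v)
def Rlist : List V := (Finset.univ.filter (fun v => v ∉ L)).toList
def legs (j : ℕ) : List V := (Rlist L).filter (fun v => pos L nbr v = j)
def cc (j : ℕ) : ℕ := (legs L nbr j).length
def bl (ε i : ℕ) : ℕ := if i % 2 = ε then 1 else cc L nbr i
def FF (ε j : ℕ) : ℕ := ((List.range j).map (bl L nbr ε)).sum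
def TT (j : ℕ) : ℕ := FF L nbr 0 j + FF L nbr 1 j
def blockL (ε i : ℕ) : List V := if i % 2 = ε then [sJ L d i] else legs L nbr i
def classL (ε : ℕ) : List V := (List.range L.length).flatMap (blockL L nbr d ε)
def ordL : List V := classL L nbr d 0 ++ classL L nbr d 1
def idx (v : V) : ℕ := 1 + (ordL L nbr d).idxOf v

lemma mem_Rlist (v : V) : v ∈ Rlist L ↔ v ∉ L := by
  simp [Rlist, Finset.mem_toList]

lemma mem_legs {v : V} {j : ℕ} : v ∈ legs L nbr j ↔ v ∉ L ∧ pos L nbr v = j := by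
  simp [legs, List.mem_filter, mem_Rlist]

lemma Rlist_nodup : (Rlist L).Nodup := Finset.nodup_toList _

lemma legs_nodup (j : ℕ) : (legs L nbr j).Nodup := (Rlist_nodup L).filter _

lemma sJ_mem {j : ℕ} (hj : j < L.length) : sJ L d j ∈ L := by
  rw [sJ, L.getD_eq_getElem d hj]
  exact List.getElem_mem hj

lemma pos_sJ (hnd : L.Nodup) {j : ℕ} (hj : j < L.length) : pos L nbr (sJ L d j) = j := by
  rw [pos, if_pos (sJ_mem L d hj), sJ, L.getD_eq_getElem d hj]
  exact hnd.idxOf_getElem j hj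

lemma sJ_inj (hnd : L.Nodup) {i j : ℕ} (hi : i < L.length) (hj : j < L.length)
    (h : sJ L d i = sJ L d j) : i = j := by
  rw [sJ, sJ, L.getD_eq_getElem d hi, L.getD_eq_getElem d hj] at h
  exact (hnd.getElem_inj_iff).mp h

lemma blockL_length (ε i : ℕ) : (blockL L nbr d ε i).length = bl L nbr ε i := by
  rw [blockL, bl]
  split <;> simp [cc]

lemma classL_length (ε : ℕ) : (classL L nbr d ε).length = FF L nbr ε L.length := by
  rw [classL, List.length_flatMap, FF]
  congr 1
  exact List.map_congr_left (fun i _ => blockL_length L nbr d ε i)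

lemma FF_succ (ε j : ℕ) : FF L nbr ε (j + 1) = FF L nbr ε j + bl L nbr ε j := by
  rw [FF, FF, List.range_succ, List.map_append, List.sum_append]
  simp

lemma TT_succ (j : ℕ) : TT L nbr (j + 1) = TT L nbr j + 1 + cc L nbr j := by
  rw [TT, TT, FF_succ, FF_succ, bl, bl]
  rcases Nat.mod_two_eq_zero_or_one j with h | h <;> simp [h] <;> omega

lemma TT_mono {i j : ℕ} (h : i ≤ j) : TT L nbr i ≤ TT L nbr j := by
  induction j with
  | zero =>
    have : i = 0 := by omega
    subst this
    exact le_rfl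
  | succ n ih =>
    rcases Nat.lt_or_ge i (n + 1) with h' | h'
    · have h1 := TT_succ L nbr n
      have h2 := ih (by omega)
      omega
    · have : i = n + 1 := by omega
      subst this
      exact le_rfl

lemma TT_step_le {i j : ℕ} (h : i < j) : TT L nbr i + 1 + cc L nbr i ≤ TT L nbr j := by
  rw [← TT_succ]
  exact TT_mono L nbr h

lemma loc {x : V} {ε i : ℕ} (hx : x ∈ blockL L nbr d ε i) :
    (i % 2 = ε ∧ x = sJ L d i) ∨ (i % 2 ≠ ε ∧ x ∈ legs L nbr i) := by
  rw [blockL] at hx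
  split at hx
  · left; exact ⟨by assumption, by simpa using hx⟩
  · right; exact ⟨by assumption, hx⟩

lemma leg_not_mem {x : V} {i : ℕ} (hx : x ∈ legs L nbr i) : x ∉ L :=
  ((mem_legs L nbr).mp hx).1

lemma leg_pos {x : V} {i : ℕ} (hx : x ∈ legs L nbr i) : pos L nbr x = i :=
  ((mem_legs L nbr).mp hx).2

lemma idxOf_classL_sJ (hnd : L.Nodup) {j ε : ℕ} (hj : j < L.length) (hε : j % 2 = ε) :
    (classL L nbr d ε).idxOf (sJ L d j) = FF L nbr ε j := by
  rw [classL]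
  have hmem : sJ L d j ∈ blockL L nbr d ε j := by rw [blockL, if_pos hε]; simp
  have hnot : ∀ i, i < L.length → i ≠ j → sJ L d j ∉ blockL L nbr d ε i := by
    intro i hi hij hmem'
    rcases loc L nbr d hmem' with ⟨_, h2⟩ | ⟨_, h2⟩
    · exact hij (sJ_inj L d hnd hi hj h2.symm)
    · exact leg_not_mem L nbr h2 (sJ_mem L d hj)
  rw [CatAux.idxOf_flatMap_range _ _ j hj _ hmem hnot]
  have h0 : (blockL L nbr d ε j).idxOf (sJ L d j) = 0 := by rw [blockL, if_pos hε]; simp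
  have h1 : (fun i => (blockL L nbr d ε i).length) = bl L nbr ε :=
    funext (blockL_length L nbr d ε)
  rw [h0, h1, FF]
  omega

lemma idxOf_classL_leg (hnbrL : ∀ v, v ∉ L → nbr v ∈ L) {v : V} {ε : ℕ} (hv : v ∉ L)
    (hε : pos L nbr v % 2 ≠ ε) :
    (classL L nbr d ε).idxOf v
      = FF L nbr ε (pos L nbr v) + (legs L nbr (pos L nbr v)).idxOf v := by
  have hvl : v ∈ legs L nbr (pos L nbr v) := (mem_legs L nbr).mpr ⟨hv, rfl⟩
  have hpos : pos L nbr v < L.length := by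
    rw [pos, if_neg hv]
    exact List.idxOf_lt_length_iff.mpr (hnbrL v hv)
  rw [classL]
  have hmem : v ∈ blockL L nbr d ε (pos L nbr v) := by rw [blockL, if_neg hε]; exact hvl
  have hnot : ∀ i, i < L.length → i ≠ pos L nbr v → v ∉ blockL L nbr d ε i := by
    intro i hi hij hmem'
    rcases loc L nbr d hmem' with ⟨_, h2⟩ | ⟨_, h2⟩
    · exact hv (h2 ▸ sJ_mem L d hi)
    · exact hij (leg_pos L nbr h2 ▸ leg_pos L nbr hvl ▸ rfl)
  rw [CatAux.idxOf_flatMap_range _ _ _ hpos _ hmem hnot]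
  have h1 : (fun i => (blockL L nbr d ε i).length) = bl L nbr ε :=
    funext (blockL_length L nbr d ε)
  rw [h1, blockL, if_neg hε, FF]

lemma mem_classL_sJ {j ε : ℕ} (hj : j < L.length) (hε : j % 2 = ε) :
    sJ L d j ∈ classL L nbr d ε :=
  List.mem_flatMap.mpr ⟨j, List.mem_range.mpr hj, by rw [blockL, if_pos hε]; simp⟩

lemma mem_classL_leg {v : V} {ε : ℕ} (hv : v ∉ L) (hpos : pos L nbr v < L.length)
    (hε : pos L nbr v % 2 ≠ ε) : v ∈ classL L nbr d ε :=
  List.mem_flatMap.mpr ⟨pos L nbr v, List.mem_range.mpr hpos, by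
    rw [blockL, if_neg hε]; exact (mem_legs L nbr).mpr ⟨hv, rfl⟩⟩

lemma not_mem_classL_sJ (hnd : L.Nodup) {j ε : ℕ} (hj : j < L.length) (hε : j % 2 ≠ ε) :
    sJ L d j ∉ classL L nbr d ε := by
  intro h
  obtain ⟨i, hi, hmem⟩ := List.mem_flatMap.mp h
  have hi' := List.mem_range.mp hi
  rcases loc L nbr d hmem with ⟨h1, h2⟩ | ⟨_, h2⟩
  · have := sJ_inj L d hnd hj hi' h2
    subst this
    exact hε h1
  · exact leg_not_mem L nbr h2 (sJ_mem L d hj)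

lemma not_mem_classL_leg {v : V} {ε : ℕ} (hv : v ∉ L) (hε : pos L nbr v % 2 = ε) :
    v ∉ classL L nbr d ε := by
  intro h
  obtain ⟨i, hi, hmem⟩ := List.mem_flatMap.mp h
  rcases loc L nbr d hmem with ⟨_, h2⟩ | ⟨h1, h2⟩
  · have hi' := List.mem_range.mp hi
    exact hv (h2 ▸ sJ_mem L d hi')
  · exact h1 (leg_pos L nbr h2 ▸ hε)

lemma classL_nodup (hnd : L.Nodup) (ε : ℕ) : (classL L nbr d ε).Nodup := by
  rw [classL, List.nodup_flatMap]
  constructor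
  · intro i _
    rw [blockL]
    split
    · simp
    · exact legs_nodup L nbr i
  · rw [List.pairwise_iff_getElem]
    intro i j hi hj hij
    simp only [List.getElem_range] at *
    have hi' : i < L.length := by simpa using hi
    have hj' : j < L.length := by simpa using hj
    intro x hx hx'
    rcases loc L nbr d hx with ⟨_, h2⟩ | ⟨_, h2⟩ <;>
      rcases loc L nbr d hx' with ⟨_, h4⟩ | ⟨_, h4⟩
    · exact absurd (sJ_inj L d hnd hi' hj' (h2 ▸ h4)) (by omega)
    · exact leg_not_mem L nbr h4 (h2 ▸ sJ_mem L d hi')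
    · exact leg_not_mem L nbr h2 (h4 ▸ sJ_mem L d hj')
    · have := leg_pos L nbr h2
      have := leg_pos L nbr h4
      omega

lemma ordL_nodup (hnd : L.Nodup) : (ordL L nbr d).Nodup := by
  rw [ordL, List.nodup_append]
  refine ⟨classL_nodup L nbr d hnd 0, classL_nodup L nbr d hnd 1, ?_⟩
  intro x hx y hx' hxy
  subst hxy
  obtain ⟨i, hi, hmem⟩ := List.mem_flatMap.mp hx
  obtain ⟨i', hi', hmem'⟩ := List.mem_flatMap.mp hx'
  have him := List.mem_range.mp hi
  have him' := List.mem_range.mp hi'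
  rcases loc L nbr d hmem with ⟨h1, h2⟩ | ⟨h1, h2⟩ <;>
    rcases loc L nbr d hmem' with ⟨h3, h4⟩ | ⟨h3, h4⟩
  · have := sJ_inj L d hnd him him' (h2 ▸ h4)
    omega
  · exact leg_not_mem L nbr h4 (h2 ▸ sJ_mem L d him)
  · exact leg_not_mem L nbr h2 (h4 ▸ sJ_mem L d him')
  · have := leg_pos L nbr h2
    have := leg_pos L nbr h4
    omega

lemma mem_ordL (hnbrL : ∀ v, v ∉ L → nbr v ∈ L) (v : V) : v ∈ ordL L nbr d := by
  rw [ordL, List.mem_append]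
  by_cases hv : v ∈ L
  · have hlt : L.idxOf v < L.length := List.idxOf_lt_length_iff.mpr hv
    have hveq : sJ L d (L.idxOf v) = v := by
      rw [sJ, L.getD_eq_getElem d hlt]
      exact List.getElem_idxOf hlt
    rcases Nat.mod_two_eq_zero_or_one (L.idxOf v) with h | h
    · left; exact hveq ▸ mem_classL_sJ L nbr d hlt h
    · right; exact hveq ▸ mem_classL_sJ L nbr d hlt h
  · have hpos : pos L nbr v < L.length := by
      rw [pos, if_neg hv]
      exact List.idxOf_lt_length_iff.mpr (hnbrL v hv)
    rcases Nat.mod_two_eq_zero_or_one (pos L nbr v) with h | h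
    · right; exact mem_classL_leg L nbr d hv hpos (by omega)
    · left; exact mem_classL_leg L nbr d hv hpos (by omega)

lemma ordL_length (hnd : L.Nodup) (hnbrL : ∀ v, v ∉ L → nbr v ∈ L) :
    (ordL L nbr d).length = Fintype.card V := by
  have h1 : (ordL L nbr d).toFinset = Finset.univ := by
    ext v
    simp [List.mem_toFinset, mem_ordL L nbr d hnbrL v]
  have h2 := List.toFinset_card_of_nodup (ordL_nodup L nbr d hnd)
  rw [h1, Finset.card_univ] at h2
  omega

lemma idx_spine (hnd : L.Nodup) {j : ℕ} (hj : j < L.length) :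
    idx L nbr d (sJ L d j)
      = 1 + (if j % 2 = 0 then 0 else FF L nbr 0 L.length) + FF L nbr (j % 2) j := by
  rw [idx, ordL]
  rcases Nat.mod_two_eq_zero_or_one j with h | h
  · rw [List.idxOf_append_of_mem (mem_classL_sJ L nbr d hj h),
      idxOf_classL_sJ L nbr d hnd hj h, if_pos h, h]
  · rw [List.idxOf_append_of_notMem (not_mem_classL_sJ L nbr d hnd hj (by omega)),
      idxOf_classL_sJ L nbr d hnd hj h, classL_length, if_neg (by omega), h]
    omega

lemma idx_leg (hnbrL : ∀ v, v ∉ L → nbr v ∈ L) {v : V} (hv : v ∉ L) :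
    idx L nbr d v
      = 1 + (if pos L nbr v % 2 = 1 then 0 else FF L nbr 0 L.length)
        + FF L nbr (1 - pos L nbr v % 2) (pos L nbr v)
        + (legs L nbr (pos L nbr v)).idxOf v := by
  have hpos : pos L nbr v < L.length := by
    rw [pos, if_neg hv]
    exact List.idxOf_lt_length_iff.mpr (hnbrL v hv)
  rw [idx, ordL]
  rcases Nat.mod_two_eq_zero_or_one (pos L nbr v) with h | h
  · rw [List.idxOf_append_of_notMem (not_mem_classL_leg L nbr d hv (h ▸ rfl)),
      idxOf_classL_leg L nbr d hnbrL hv (by omega), classL_length, if_neg (by omega)]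
    have h1 : 1 - pos L nbr v % 2 = 1 := by omega
    rw [h1]
    omega
  · rw [List.idxOf_append_of_mem (mem_classL_leg L nbr d hv hpos (by omega)),
      idxOf_classL_leg L nbr d hnbrL hv (by omega), if_pos h]
    have h1 : 1 - pos L nbr v % 2 = 0 := by omega
    rw [h1]
    omega

lemma sum_spine (hnd : L.Nodup) {j : ℕ} (hj : j + 1 < L.length) :
    idx L nbr d (sJ L d j) + idx L nbr d (sJ L d (j + 1))
      = FF L nbr 0 L.length + TT L nbr j + cc L nbr j + 2 := by
  have e1 := idx_spine L nbr d hnd (show j < L.length by omega)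
  have e2 := idx_spine L nbr d hnd hj
  have hFs0 := FF_succ L nbr 0 j
  have hFs1 := FF_succ L nbr 1 j
  have hT : TT L nbr j = FF L nbr 0 j + FF L nbr 1 j := rfl
  rcases Nat.mod_two_eq_zero_or_one j with h | h
  · have h' : (j + 1) % 2 = 1 := by omega
    rw [h] at e1
    rw [h'] at e2
    rw [e1, e2, if_pos rfl, if_neg (by omega)]
    have hbl : bl L nbr 1 j = cc L nbr j := by rw [bl, if_neg (by omega)]
    omega
  · have h' : (j + 1) % 2 = 0 := by omega
    rw [h] at e1
    rw [h'] at e2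
    rw [e1, e2, if_pos rfl, if_neg (by omega)]
    have hbl : bl L nbr 0 j = cc L nbr j := by rw [bl, if_neg (by omega)]
    omega

lemma sum_leg (hnd : L.Nodup) (hnbrL : ∀ v, v ∉ L → nbr v ∈ L) {v : V} (hv : v ∉ L) :
    idx L nbr d v + idx L nbr d (sJ L d (pos L nbr v))
      = FF L nbr 0 L.length + TT L nbr (pos L nbr v) + 2
        + (legs L nbr (pos L nbr v)).idxOf v := by
  have hpos : pos L nbr v < L.length := by
    rw [pos, if_neg hv]
    exact List.idxOf_lt_length_iff.mpr (hnbrL v hv)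
  have e1 := idx_leg L nbr d hnbrL hv
  have e2 := idx_spine L nbr d hnd hpos
  have hT : TT L nbr (pos L nbr v)
      = FF L nbr 0 (pos L nbr v) + FF L nbr 1 (pos L nbr v) := rfl
  rcases Nat.mod_two_eq_zero_or_one (pos L nbr v) with h | h
  · rw [h] at e1 e2
    norm_num at e1 e2
    omega
  · rw [h] at e1 e2
    norm_num at e1 e2
    omega

end
end CatCore



namespace CatAux
variable {k : ℕ}

lemma cnt_window (hk : 0 < k) (M : ℕ) (r : ZMod k) :
    ((Finset.Ico M (M + k)).filter (fun j : ℕ => (j : ZMod k) = r)).card = 1 := by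
  haveI : NeZero k := ⟨hk.ne'⟩
  rw [Finset.card_eq_one]
  refine ⟨M + (r - (M : ZMod k)).val, ?_⟩
  ext j
  simp only [Finset.mem_filter, Finset.mem_Ico, Finset.mem_singleton]
  constructor
  · rintro ⟨⟨h1, h2⟩, h3⟩
    obtain ⟨d, rfl⟩ := Nat.exists_eq_add_of_le h1
    have hd : d < k := by omega
    have hcast : ((d : ℕ) : ZMod k) = r - (M : ZMod k) := by
      push_cast at h3
      linear_combination h3
    have hval := congrArg ZMod.val hcast
    rw [ZMod.val_cast_of_lt hd] at hval
    omega
  · rintro rfl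
    refine ⟨⟨Nat.le_add_right _ _, by have := (r - (M : ZMod k)).val_lt; omega⟩, ?_⟩
    push_cast
    rw [ZMod.natCast_rightInverse (r - (M : ZMod k))]
    ring

lemma cnt_small (hk : 0 < k) {N : ℕ} (hNk : N ≤ k) (t : ℕ) (a : ZMod k) :
    ((Finset.Ico t (t + N)).filter (fun j : ℕ => (j : ZMod k) = a)).card ≤ 1 := by
  rw [Finset.card_le_one]
  intro i hi j hj
  simp only [Finset.mem_filter, Finset.mem_Ico] at hi hj
  obtain ⟨⟨hi1, hi2⟩, hi3⟩ := hi
  obtain ⟨⟨hj1, hj2⟩, hj3⟩ := hj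
  have hmod : i % k = j % k := by
    rw [← ZMod.natCast_eq_natCast_iff', hi3, hj3]
  rcases le_total i j with h | h
  · have hdvd : k ∣ j - i := (Nat.modEq_iff_dvd' h).mp hmod
    have := Nat.eq_zero_of_dvd_of_lt hdvd (by omega)
    omega
  · have hdvd : k ∣ i - j := (Nat.modEq_iff_dvd' h).mp hmod.symm
    have := Nat.eq_zero_of_dvd_of_lt hdvd (by omega)
    omega

lemma cnt_le_cnt (hk : 0 < k) (t N : ℕ) (a b : ZMod k) :
    ((Finset.Ico t (t + N)).filter (fun j : ℕ => (j : ZMod k) = a)).card ≤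
      ((Finset.Ico t (t + N)).filter (fun j : ℕ => (j : ZMod k) = b)).card + 1 := by
  induction N using Nat.strong_induction_on with
  | _ N ih =>
    rcases le_or_gt N k with hNk | hNk
    · have := cnt_small hk hNk t a
      omega
    · have hsplit : Finset.Ico t (t + N) =
          Finset.Ico t (t + (N - k)) ∪ Finset.Ico (t + (N - k)) (t + (N - k) + k) := by
        rw [Finset.Ico_union_Ico_eq_Ico (by omega) (by omega)]
        congr 1
        omega
      have hdisj : Disjoint (Finset.Ico t (t + (N - k)))
          (Finset.Ico (t + (N - k)) (t + (N - k) + k)) := by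
        apply Finset.Ico_disjoint_Ico_consecutive
      have key : ∀ r : ZMod k,
          ((Finset.Ico t (t + N)).filter (fun j : ℕ => (j : ZMod k) = r)).card =
          ((Finset.Ico t (t + (N - k))).filter (fun j : ℕ => (j : ZMod k) = r)).card + 1 := by
        intro r
        rw [hsplit, Finset.filter_union, Finset.card_union_of_disjoint
          (Finset.disjoint_filter_filter hdisj), cnt_window hk _ r]
      rw [key a, key b]
      have := ih (N - k) (by omega)
      omega
end CatAux

namespace CatAux2
open CatAux
lemma balance {k : ℕ} {α : Type} [DecidableEq α] (hk : 0 < k) (s : Finset α) (g : α → ℕ) (t : ℕ)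
    (hinj : Set.InjOn g s) (him : ∀ x ∈ s, g x ∈ Finset.Ico t (t + s.card)) (a b : ZMod k) :
    ((s.filter (fun x => (g x : ZMod k) = a)).card : ℤ) -
      ((s.filter (fun x => (g x : ZMod k) = b)).card : ℤ) ≤ 1 := by
  have himg : s.image g = Finset.Ico t (t + s.card) := by
    apply Finset.eq_of_subset_of_card_le
    · intro y hy
      obtain ⟨x, hx, rfl⟩ := Finset.mem_image.mp hy
      exact him x hx
    · rw [Finset.card_image_of_injOn hinj, Nat.card_Ico]
      omega
  have key : ∀ r : ZMod k, (s.filter (fun x => (g x : ZMod k) = r)).card =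
      ((Finset.Ico t (t + s.card)).filter (fun j : ℕ => (j : ZMod k) = r)).card := by
    intro r
    apply Finset.card_bij (fun x _ => g x)
    · intro x hx
      simp only [Finset.mem_filter] at hx ⊢
      exact ⟨himg ▸ Finset.mem_image_of_mem g hx.1, hx.2⟩
    · intro x hx y hy h
      exact hinj (Finset.mem_filter.mp hx).1 (Finset.mem_filter.mp hy).1 h
    · intro j hj
      simp only [Finset.mem_filter] at hj
      have hj1 := hj.1
      rw [← himg, Finset.mem_image] at hj1
      obtain ⟨x, hx, rfl⟩ := hj1
      exact ⟨x, Finset.mem_filter.mpr ⟨hx, hj.2⟩, rfl⟩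
  rw [key a, key b]
  have := cnt_le_cnt hk t s.card a b
  omega
end CatAux2

theorem cat_main {V : Type} [Fintype V] [DecidableEq V] (k : ℕ) (hk : 0 < k)
    (G : SimpleGraph V) [DecidableRel G.Adj] (htree : G.IsTree)
    (a b : V) (P : G.Walk a b) (hP : P.IsPath)
    (hdom : ∀ v : V, ∃ u ∈ P.support, G.dist v u ≤ 1) :
    ∃ f : V → ZMod k,
      (∀ a b : ZMod k,
        ((Finset.univ.filter (fun v => f v = a)).card : ℤ) -
          ((Finset.univ.filter (fun v => f v = b)).card : ℤ) ≤ 1) ∧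
      (∀ a b : ZMod k,
        ((G.edgeFinset.filter (fun e => edgeWeight k f e = a)).card : ℤ) -
          ((G.edgeFinset.filter (fun e => edgeWeight k f e = b)).card : ℤ) ≤ 1) := by
  classical
  haveI : Nonempty V := ⟨a⟩
  set L : List V := P.support with hLdef
  have hnd : L.Nodup := hP.support_nodup
  have hLne : L ≠ [] := P.support_ne_nil
  have hchain : L.IsChain G.Adj := P.isChain_adj_support
  have hnbr_ex : ∀ v : V, v ∉ L → ∃ u, u ∈ L ∧ G.Adj v u := by
    intro v hv
    obtain ⟨u, hu, hdist⟩ := hdom v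
    have hne : v ≠ u := fun h => hv (by rw [h]; exact hu)
    have hpos : 0 < G.dist v u := htree.isConnected.pos_dist_of_ne hne
    have h1 : G.dist v u = 1 := by omega
    exact ⟨u, hu, SimpleGraph.dist_eq_one_iff_adj.mp h1⟩
  let nbr : V → V := fun v => if h : v ∈ L then v else (hnbr_ex v h).choose
  have hnbr : ∀ v, v ∉ L → nbr v ∈ L ∧ G.Adj v (nbr v) := by
    intro v hv
    simp only [nbr, dif_neg hv]
    exact (hnbr_ex v hv).choose_spec
  have hnbrL : ∀ v, v ∉ L → nbr v ∈ L := fun v hv => (hnbr v hv).1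
  let d : V := a
  -- vertex side
  have hordnd := CatCore.ordL_nodup L nbr d hnd
  have hordlen := CatCore.ordL_length L nbr d hnd hnbrL
  have hmemord := CatCore.mem_ordL L nbr d hnbrL
  have hn1 : 0 < Fintype.card V := Fintype.card_pos
  have hidx_inj : Set.InjOn (CatCore.idx L nbr d) (Finset.univ : Finset V) := by
    intro v _ w _ h
    have hv := hmemord v
    have hw := hmemord w
    have h' : (CatCore.ordL L nbr d).idxOf v = (CatCore.ordL L nbr d).idxOf w := by
      simp only [CatCore.idx] at h
      omega
    exact (List.idxOf_inj hv).mp h'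
  have hidx_mem : ∀ v ∈ (Finset.univ : Finset V),
      CatCore.idx L nbr d v ∈ Finset.Ico 1 (1 + (Finset.univ : Finset V).card) := by
    intro v _
    have hvlt := List.idxOf_lt_length_iff.mpr (hmemord v)
    rw [Finset.mem_Ico]
    refine ⟨by simp [CatCore.idx], ?_⟩
    rw [hordlen] at hvlt
    simp only [CatCore.idx, Finset.card_univ]
    omega
  -- edge side
  let ψ : Sym2 V → ℕ := Sym2.lift
    ⟨fun u w => CatCore.idx L nbr d u + CatCore.idx L nbr d w, fun u w => Nat.add_comm _ _⟩
  let sE : List (Sym2 V) := (List.range (L.length - 1)).map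
      (fun j => s(CatCore.sJ L d j, CatCore.sJ L d (j + 1)))
  let lE : List (Sym2 V) := (CatCore.Rlist L).map (fun v => s(v, nbr v))
  have hTm : CatCore.TT L nbr L.length = Fintype.card V := by
    have h1 := hordlen
    rw [CatCore.ordL, List.length_append, CatCore.classL_length, CatCore.classL_length] at h1
    rw [CatCore.TT]
    exact h1
  have hmpos : 0 < L.length := List.length_pos_iff.mpr hLne
  have hmlen : L.toFinset.card = L.length := List.toFinset_card_of_nodup hnd
  have hmn : L.length ≤ Fintype.card V := by
    rw [← hmlen, ← Finset.card_univ]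
    exact Finset.card_le_univ _
  have hψs : ∀ j, j + 1 < L.length →
      ψ (s(CatCore.sJ L d j, CatCore.sJ L d (j + 1)))
        = CatCore.FF L nbr 0 L.length + CatCore.TT L nbr (j + 1) + 1 := by
    intro j hj
    have h1 : ψ (s(CatCore.sJ L d j, CatCore.sJ L d (j + 1)))
        = CatCore.idx L nbr d (CatCore.sJ L d j)
          + CatCore.idx L nbr d (CatCore.sJ L d (j + 1)) := Sym2.lift_mk _ _ _
    rw [h1, CatCore.sum_spine L nbr d hnd hj]
    have h2 := CatCore.TT_succ L nbr j
    omega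
  have hψl : ∀ v, v ∉ L →
      ψ (s(v, nbr v))
        = CatCore.FF L nbr 0 L.length + CatCore.TT L nbr (CatCore.pos L nbr v) + 2
          + (CatCore.legs L nbr (CatCore.pos L nbr v)).idxOf v := by
    intro v hv
    have hlt := List.idxOf_lt_length_iff.mpr (hnbrL v hv)
    have hsJnbr : CatCore.sJ L d (CatCore.pos L nbr v) = nbr v := by
      rw [CatCore.pos, if_neg hv, CatCore.sJ, L.getD_eq_getElem d hlt]
      exact List.getElem_idxOf hlt
    have h1 : ψ (s(v, nbr v))
        = CatCore.idx L nbr d v + CatCore.idx L nbr d (nbr v) := Sym2.lift_mk _ _ _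
    rw [h1, ← hsJnbr, CatCore.sum_leg L nbr d hnd hnbrL hv]
  have hposlt : ∀ v, v ∉ L → CatCore.pos L nbr v < L.length := by
    intro v hv
    rw [CatCore.pos, if_neg hv]
    exact List.idxOf_lt_length_iff.mpr (hnbrL v hv)
  have hlr : ∀ v, v ∉ L →
      (CatCore.legs L nbr (CatCore.pos L nbr v)).idxOf v
        < CatCore.cc L nbr (CatCore.pos L nbr v) := by
    intro v hv
    exact List.idxOf_lt_length_iff.mpr ((CatCore.mem_legs L nbr).mpr ⟨hv, rfl⟩)
  have hsEψ : (sE.map ψ).Nodup := by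
    rw [List.map_map]
    apply List.Nodup.map_on ?_ List.nodup_range
    intro i hi j hj hval
    have hi' := List.mem_range.mp hi
    have hj' := List.mem_range.mp hj
    simp only [Function.comp_apply] at hval
    rw [hψs i (by omega), hψs j (by omega)] at hval
    by_contra hne
    rcases Nat.lt_or_ge i j with h | h
    · have := CatCore.TT_step_le L nbr (show i + 1 < j + 1 by omega)
      omega
    · have h2 : j < i := by omega
      have := CatCore.TT_step_le L nbr (show j + 1 < i + 1 by omega)
      omega
  have hlEψ : (lE.map ψ).Nodup := by
    rw [List.map_map]
    apply List.Nodup.map_on ?_ (CatCore.Rlist_nodup L)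
    intro v hv w hw hval
    have hv' : v ∉ L := (CatCore.mem_Rlist L v).mp hv
    have hw' : w ∉ L := (CatCore.mem_Rlist L w).mp hw
    simp only [Function.comp_apply] at hval
    rw [hψl v hv', hψl w hw'] at hval
    rcases Nat.lt_trichotomy (CatCore.pos L nbr v) (CatCore.pos L nbr w) with h | h | h
    · have := CatCore.TT_step_le L nbr h
      have := hlr v hv'
      omega
    · rw [h] at hval
      have h2 : (CatCore.legs L nbr (CatCore.pos L nbr w)).idxOf v
          = (CatCore.legs L nbr (CatCore.pos L nbr w)).idxOf w := by omega
      have hvm : v ∈ CatCore.legs L nbr (CatCore.pos L nbr w) :=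
        (CatCore.mem_legs L nbr).mpr ⟨hv', h⟩
      have hwm : w ∈ CatCore.legs L nbr (CatCore.pos L nbr w) :=
        (CatCore.mem_legs L nbr).mpr ⟨hw', rfl⟩
      exact (List.idxOf_inj hvm).mp h2
    · have := CatCore.TT_step_le L nbr h
      have := hlr w hw'
      omega
  have hdisjψ : List.Disjoint (sE.map ψ) (lE.map ψ) := by
    intro x hx hx'
    rw [List.map_map] at hx hx'
    obtain ⟨j, hj, rfl⟩ := List.mem_map.mp hx
    obtain ⟨v, hv, hval⟩ := List.mem_map.mp hx'
    have hj' := List.mem_range.mp hj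
    have hv' := (CatCore.mem_Rlist L v).mp hv
    simp only [Function.comp_apply] at hval
    rw [hψl v hv', hψs j (by omega)] at hval
    have h1 := hlr v hv'
    rcases Nat.lt_or_ge (CatCore.pos L nbr v) (j + 1) with h | h
    · have := CatCore.TT_step_le L nbr h
      omega
    · have := CatCore.TT_mono L nbr h
      omega
  have hELψnd : ((sE ++ lE).map ψ).Nodup := by
    rw [List.map_append]
    exact List.Nodup.append hsEψ hlEψ hdisjψ
  have hELnd : (sE ++ lE).Nodup := hELψnd.of_map ψ
  have hRlen : (CatCore.Rlist L).length = Fintype.card V - L.length := by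
    rw [CatCore.Rlist, Finset.length_toList]
    have h1 : Finset.univ.filter (fun v => v ∈ L) = L.toFinset := by
      ext v
      simp
    have h2 := Finset.card_filter_add_card_filter_not
      (s := (Finset.univ : Finset V)) (p := fun v => v ∈ L)
    rw [h1, hmlen, Finset.card_univ] at h2
    omega
  have hELlen : (sE ++ lE).length = Fintype.card V - 1 := by
    rw [List.length_append, List.length_map, List.length_map, List.length_range, hRlen]
    omega
  have hEfincard : (sE ++ lE).toFinset.card = Fintype.card V - 1 := by
    rw [List.toFinset_card_of_nodup hELnd, hELlen]
  have hadj : ∀ j, j + 1 < L.length → G.Adj (CatCore.sJ L d j) (CatCore.sJ L d (j + 1)) := by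
    intro j hj
    have := List.isChain_iff_getElem.mp hchain j (by omega)
    rw [CatCore.sJ, CatCore.sJ, L.getD_eq_getElem d (by omega), L.getD_eq_getElem d hj]
    simpa using this
  have hsub : (sE ++ lE).toFinset ⊆ G.edgeFinset := by
    intro e he
    rw [List.mem_toFinset, List.mem_append] at he
    rw [SimpleGraph.mem_edgeFinset]
    rcases he with h | h
    · obtain ⟨j, hj, rfl⟩ := List.mem_map.mp h
      have hj' := List.mem_range.mp hj
      rw [SimpleGraph.mem_edgeSet]
      exact hadj j (by omega)
    · obtain ⟨v, hv, rfl⟩ := List.mem_map.mp h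
      have hv' := (CatCore.mem_Rlist L v).mp hv
      rw [SimpleGraph.mem_edgeSet]
      exact (hnbr v hv').2
  have htcard := htree.card_edgeFinset
  have hEeq : G.edgeFinset = (sE ++ lE).toFinset :=
    (Finset.eq_of_subset_of_card_le hsub (by omega)).symm
  have hinjψ : Set.InjOn ψ (G.edgeFinset : Set (Sym2 V)) := by
    intro e he e' he' h
    rw [Finset.mem_coe, hEeq, List.mem_toFinset] at he he'
    exact List.inj_on_of_nodup_map hELψnd he he' h
  have hTsucc_last := CatCore.TT_succ L nbr (L.length - 1)
  have hmm : L.length - 1 + 1 = L.length := by omega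
  rw [hmm] at hTsucc_last
  have hbnd : ∀ e ∈ G.edgeFinset,
      ψ e ∈ Finset.Ico (CatCore.FF L nbr 0 L.length + 2)
        (CatCore.FF L nbr 0 L.length + 2 + G.edgeFinset.card) := by
    intro e he
    have hcard : G.edgeFinset.card = Fintype.card V - 1 := by omega
    rw [hEeq, List.mem_toFinset, List.mem_append] at he
    rw [Finset.mem_Ico, hcard]
    rcases he with h | h
    · obtain ⟨j, hj, rfl⟩ := List.mem_map.mp h
      have hj' := List.mem_range.mp hj
      rw [hψs j (by omega)]
      have h2 := CatCore.TT_succ L nbr j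
      have h3 := CatCore.TT_mono L nbr (show j + 1 ≤ L.length - 1 by omega)
      omega
    · obtain ⟨v, hv, rfl⟩ := List.mem_map.mp h
      have hv' := (CatCore.mem_Rlist L v).mp hv
      rw [hψl v hv']
      have h1 := hlr v hv'
      have h2 := CatCore.TT_succ L nbr (CatCore.pos L nbr v)
      have h3 := CatCore.TT_mono L nbr
        (show CatCore.pos L nbr v + 1 ≤ L.length from hposlt v hv')
      omega
  refine ⟨fun v => ((CatCore.idx L nbr d v : ℕ) : ZMod k), ?_, ?_⟩
  · intro x y
    exact CatAux2.balance hk Finset.univ (CatCore.idx L nbr d) 1 hidx_inj hidx_mem x y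
  · intro x y
    have hconv : ∀ e, edgeWeight k (fun v => ((CatCore.idx L nbr d v : ℕ) : ZMod k)) e
        = ((ψ e : ℕ) : ZMod k) := by
      intro e
      induction e using Sym2.ind with
      | _ u w =>
        have h1 : ψ (s(u, w)) = CatCore.idx L nbr d u + CatCore.idx L nbr d w :=
          Sym2.lift_mk _ _ _
        rw [h1, edgeWeight, Sym2.lift_mk]
        push_cast
        rfl
    simp only [hconv]
    exact CatAux2.balance hk G.edgeFinset ψ (CatCore.FF L nbr 0 L.length + 2) hinjψ hbnd x y

/-- For every integer `k > 0`, every caterpillar is `k`-cordial. -/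
theorem caterpillar_is_cordial {V : Type} [Fintype V] [DecidableEq V] (k : ℕ) (hk : 0 < k)
    (G : SimpleGraph V) [DecidableRel G.Adj] (hG : IsCaterpillar G) :
    ∃ f : V → ZMod k, IsCordialLabeling k G f := by
  obtain ⟨htree, a, b, P, hP, hmax, hdom⟩ := hG
  obtain ⟨f, h1, h2⟩ := cat_main k hk G htree a b P hP hdom
  exact ⟨f, h1, h2⟩
end

section
/- Let k be a positive integer and let T be a caterpillar with k + 1 vertices having a distinguished root vertex r (so T has k vertices not counting the root), such that r is at distance 1 from an endpoint of a maximum-length path P of T. Then T admits a labeling f of its vertices by ℤ/kℤ with f(r) = 0 such that each label appears on at most one more vertex than any other label and every edge-weight in ℤ/kℤ appears on exactly one edge. -/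
set_option linter.unusedSectionVars false
set_option linter.unusedVariables false
open Finset SimpleGraph


section WalkHelpers
variable {V : Type} {G : SimpleGraph V}

lemma concat_isPath' {u v w : V} {p : G.Walk u v} (hp : p.IsPath) (h : G.Adj v w)
    (hw : w ∉ p.support) : (p.concat h).IsPath := by
  rw [← SimpleGraph.Walk.isPath_reverse_iff, SimpleGraph.Walk.reverse_concat]
  rw [SimpleGraph.Walk.cons_isPath_iff]
  refine ⟨by rwa [SimpleGraph.Walk.isPath_reverse_iff], ?_⟩
  rwa [SimpleGraph.Walk.support_reverse, List.mem_reverse]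

lemma path_length_eq_dist (hT : G.IsTree) {u v : V} (p : G.Walk u v) (hp : p.IsPath) :
    p.length = G.dist u v := by
  obtain ⟨q, hq, hql⟩ := p.reachable.exists_path_of_dist
  have : (⟨p, hp⟩ : G.Path u v) = ⟨q, hq⟩ := hT.IsAcyclic.path_unique _ _
  rw [← hql]
  exact congrArg SimpleGraph.Walk.length (congrArg Subtype.val this)

lemma dist_getVert_le (hc : G.Connected) {u v : V} (p : G.Walk u v) (i : ℕ) :
    G.dist u (p.getVert i) ≤ i := by
  induction i with
  | zero => simp [SimpleGraph.Walk.getVert_zero]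
  | succ n ih =>
    by_cases hn : n < p.length
    · have hadj := p.adj_getVert_succ hn
      calc G.dist u (p.getVert (n+1))
          ≤ G.dist u (p.getVert n) + G.dist (p.getVert n) (p.getVert (n+1)) :=
            hc.dist_triangle
        _ ≤ n + 1 := by
            have := SimpleGraph.dist_eq_one_iff_adj.mpr hadj
            omega
    · have : p.getVert (n+1) = p.getVert n := by
        rw [p.getVert_of_length_le (by omega), p.getVert_of_length_le (by omega)]
      rw [this]; omega

lemma dist_getVert_eq (hT : G.IsTree) {u v : V} (p : G.Walk u v) (hp : p.IsPath)
    {i : ℕ} (hi : i ≤ p.length) : G.dist u (p.getVert i) = i := by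
  have h1 : G.dist u (p.getVert i) ≤ i := dist_getVert_le hT.isConnected p i
  have h2 : G.dist v (p.getVert i) ≤ p.length - i := by
    have := dist_getVert_le hT.isConnected p.reverse (p.length - i)
    rwa [SimpleGraph.Walk.getVert_reverse, Nat.sub_sub_self hi] at this
  have h3 : G.dist u v = p.length := (path_length_eq_dist hT p hp).symm
  have h4 : G.dist u v ≤ G.dist u (p.getVert i) + G.dist (p.getVert i) v :=
    hT.isConnected.dist_triangle
  rw [SimpleGraph.dist_comm (u := p.getVert i)] at h4
  omega

end WalkHelpers


section Comb
variable {V : Type} [Fintype V] [DecidableEq V]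

/-- level set -/
def Dl (d : V → ℕ) (i : ℕ) : Finset V := univ.filter (fun v => d v = i)

/-- non-spine part of level set -/
def Nspl (d : V → ℕ) (sp : Finset V) (i : ℕ) : Finset V :=
  univ.filter (fun v => d v = i ∧ v ∉ sp)

/-- prefix sums of level sizes of fixed parity -/
def Blp (d : V → ℕ) (par : ℕ) (i : ℕ) : ℕ :=
  ∑ j ∈ range i, if j % 2 = par then (Dl d j).card else 0

def Bl (d : V → ℕ) (i : ℕ) : ℕ := Blp d (i % 2) i

/-- prefix sums of all level sizes -/
def Sl (d : V → ℕ) (i : ℕ) : ℕ := ∑ j ∈ range i, (Dl d j).card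

def rho (d : V → ℕ) (sp : Finset V) (emb : V → ℕ) (v : V) : ℕ :=
  if v ∈ sp then (Nspl d sp (d v)).card
  else ((Nspl d sp (d v)).filter (fun w => emb w < emb v)).card

def Rv (d : V → ℕ) (sp : Finset V) (emb : V → ℕ) (v : V) : ℕ :=
  Bl d (d v) + rho d sp emb v

lemma Sl_eq_card (d : V → ℕ) (i : ℕ) : Sl d i = (univ.filter (fun v => d v < i)).card := by
  induction i with
  | zero => simp [Sl]
  | succ n ih =>
    rw [Sl, Finset.sum_range_succ, ← Sl, ih]
    have : (univ.filter (fun v => d v < n + 1)) =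
        (univ.filter (fun v => d v < n)) ∪ Dl d n := by
      ext v; simp only [Dl, mem_filter, mem_union, mem_univ, true_and]; omega
    rw [this, Finset.card_union_of_disjoint]
    rw [Finset.disjoint_left]
    intro x hx hx2
    simp only [Dl, mem_filter, mem_univ, true_and] at hx hx2
    omega

lemma Blp_eq_card (d : V → ℕ) (par i : ℕ) :
    Blp d par i = (univ.filter (fun v => d v < i ∧ d v % 2 = par)).card := by
  induction i with
  | zero => simp [Blp]
  | succ n ih =>
    rw [Blp, Finset.sum_range_succ, ← Blp, ih]
    by_cases hn : n % 2 = par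
    · have : (univ.filter (fun v => d v < n + 1 ∧ d v % 2 = par)) =
          (univ.filter (fun v => d v < n ∧ d v % 2 = par)) ∪ Dl d n := by
        ext v; simp only [Dl, mem_filter, mem_union, mem_univ, true_and]; omega
      rw [this, Finset.card_union_of_disjoint, if_pos hn]
      rw [Finset.disjoint_left]
      intro x hx hx2
      simp only [Dl, mem_filter, mem_univ, true_and] at hx hx2
      omega
    · have : (univ.filter (fun v => d v < n + 1 ∧ d v % 2 = par)) =
          (univ.filter (fun v => d v < n ∧ d v % 2 = par)) := by
        ext v; simp only [mem_filter, mem_univ, true_and]; omega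
      rw [this, if_neg hn, add_zero]

lemma Blp_mono (d : V → ℕ) (par : ℕ) {i j : ℕ} (h : i ≤ j) : Blp d par i ≤ Blp d par j := by
  rw [Blp_eq_card, Blp_eq_card]
  apply Finset.card_le_card
  intro v hv; simp only [mem_filter, mem_univ, true_and] at hv ⊢; omega

lemma Bl_add_Dl_le_Bl (d : V → ℕ) {i j : ℕ} (hij : i < j) (hpar : i % 2 = j % 2) :
    Bl d i + (Dl d i).card ≤ Bl d j := by
  rw [Bl, Bl, hpar]
  have h1 : Blp d (j % 2) (i + 1) = Blp d (j % 2) i + (Dl d i).card := by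
    rw [Blp, Finset.sum_range_succ, ← Blp, if_pos hpar]
  calc Blp d (j % 2) i + (Dl d i).card = Blp d (j % 2) (i+1) := h1.symm
    _ ≤ Blp d (j % 2) j := Blp_mono d _ (by omega)

lemma Bl_add_Bl_succ (d : V → ℕ) (i : ℕ) : Bl d i + Bl d (i + 1) = Sl d i := by
  have h1 : Bl d (i+1) = ∑ j ∈ range i, if j % 2 = (i+1) % 2 then (Dl d j).card else 0 := by
    rw [Bl, Blp, Finset.sum_range_succ]
    have : ¬ (i % 2 = (i+1) % 2) := by omega
    rw [if_neg this, add_zero]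
  rw [Bl, Blp, h1, Sl, ← Finset.sum_add_distrib]
  apply Finset.sum_congr rfl
  intro j _
  have : j % 2 = i % 2 ∨ j % 2 = (i+1) % 2 := by omega
  rcases this with h | h
  · rw [if_pos h, if_neg (by omega), add_zero]
  · rw [if_neg (by omega), if_pos h, zero_add]

end Comb

section Comb2
set_option linter.unusedSectionVars false
variable {V : Type} [Fintype V] [DecidableEq V]
variable {d : V → ℕ} {sp : Finset V} {emb : V → ℕ}

lemma rho_lt (hspu : ∀ v w, v ∈ sp → w ∈ sp → d v = d w → v = w)
    (hspe : ∀ v, ∃ w ∈ sp, d w = d v) (v : V) :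
    rho d sp emb v < (Dl d (d v)).card := by
  obtain ⟨w, hw, hwd⟩ := hspe v
  have hsub : Nspl d sp (d v) ⊆ Dl d (d v) := by
    intro x hx; simp only [Nspl, Dl, mem_filter, mem_univ, true_and] at hx ⊢; exact hx.1
  have hwD : w ∈ Dl d (d v) := by simp [Dl, hwd]
  have hwN : w ∉ Nspl d sp (d v) := by simp [Nspl, hw]
  have hcard : (Nspl d sp (d v)).card < (Dl d (d v)).card :=
    Finset.card_lt_card (Finset.ssubset_iff_of_subset hsub |>.mpr ⟨w, hwD, hwN⟩)
  rw [rho]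
  split_ifs with h
  · exact hcard
  · calc ((Nspl d sp (d v)).filter (fun w => emb w < emb v)).card
        ≤ (Nspl d sp (d v)).card := Finset.card_le_card (Finset.filter_subset _ _)
      _ < _ := hcard

lemma card_filter_emb_lt {N : Finset V} {v w : V} (hv : v ∈ N) (hlt : emb v < emb w) :
    (N.filter (fun y => emb y < emb v)).card < (N.filter (fun y => emb y < emb w)).card := by
  apply Finset.card_lt_card
  constructor
  · intro y hy
    simp only [Finset.mem_filter] at hy ⊢
    exact ⟨hy.1, by omega⟩
  · intro hsub
    have := hsub (Finset.mem_filter.mpr ⟨hv, hlt⟩)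
    simp at this

lemma rho_inj_level (hspu : ∀ v w, v ∈ sp → w ∈ sp → d v = d w → v = w)
    (hemb : Function.Injective emb)
    {v w : V} (hd : d v = d w) (hr : rho d sp emb v = rho d sp emb w) : v = w := by
  have key : ∀ x, x ∉ sp →
      ((Nspl d sp (d x)).filter (fun y => emb y < emb x)).card < (Nspl d sp (d x)).card := by
    intro x hx
    have hxN : x ∈ Nspl d sp (d x) := by simp [Nspl, hx]
    apply Finset.card_lt_card
    refine Finset.ssubset_iff_of_subset (Finset.filter_subset _ _) |>.mpr ⟨x, hxN, ?_⟩
    simp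
  rw [rho, rho, hd] at hr
  by_cases hv : v ∈ sp <;> by_cases hw : w ∈ sp
  · exact hspu v w hv hw hd
  · rw [if_pos hv, if_neg hw] at hr
    exact absurd hr.symm (Nat.ne_of_lt (key w hw))
  · rw [if_neg hv, if_pos hw] at hr
    have := key v hv; rw [hd] at this; omega
  · rw [if_neg hv, if_neg hw] at hr
    by_contra hne
    have hvN : v ∈ Nspl d sp (d w) := by simp [Nspl, ← hd, hv]
    have hwN : w ∈ Nspl d sp (d w) := by simp [Nspl, hw]
    rcases Nat.lt_trichotomy (emb v) (emb w) with h | h | h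
    · have := card_filter_emb_lt (emb := emb) hvN h
      omega
    · exact hne (hemb h)
    · have := card_filter_emb_lt (emb := emb) hwN h
      omega

lemma Rv_lt_class (hspu : ∀ v w, v ∈ sp → w ∈ sp → d v = d w → v = w)
    (hspe : ∀ v, ∃ w ∈ sp, d w = d v) (v : V) :
    Rv d sp emb v < (univ.filter (fun w => d w % 2 = d v % 2)).card := by
  have h1 : rho d sp emb v < (Dl d (d v)).card := rho_lt hspu hspe v
  have hsub : (univ.filter (fun w => d w < d v ∧ d w % 2 = d v % 2)) ∪ Dl d (d v) ⊆
      univ.filter (fun w => d w % 2 = d v % 2) := by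
    intro x hx
    simp only [Dl, mem_union, mem_filter, mem_univ, true_and] at hx ⊢
    rcases hx with h | h
    · exact h.2
    · rw [h]
  have hdisj : ((univ.filter (fun w => d w < d v ∧ d w % 2 = d v % 2)) ∪ Dl d (d v)).card
      = (univ.filter (fun w => d w < d v ∧ d w % 2 = d v % 2)).card + (Dl d (d v)).card := by
    rw [Finset.card_union_of_disjoint]
    rw [Finset.disjoint_left]
    intro x hx hx2
    simp only [Dl, mem_filter, mem_univ, true_and] at hx hx2
    omega
  have h2 := Finset.card_le_card hsub
  rw [hdisj] at h2
  rw [Rv, Bl, Blp_eq_card]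
  omega

/-- generic tiling injectivity -/
lemma tile_inj {α : Type} (T : Finset α) (lvl val ρ : α → ℕ) (base width : ℕ → ℕ)
    (hv : ∀ x ∈ T, val x = base (lvl x) + ρ x)
    (hρ : ∀ x ∈ T, ρ x < width (lvl x))
    (hmono : ∀ x ∈ T, ∀ y ∈ T, lvl x < lvl y → base (lvl x) + width (lvl x) ≤ base (lvl y))
    (hlevel : ∀ x ∈ T, ∀ y ∈ T, lvl x = lvl y → ρ x = ρ y → x = y) :
    ∀ x ∈ T, ∀ y ∈ T, val x = val y → x = y := by
  intro x hx y hy hval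
  rcases Nat.lt_trichotomy (lvl x) (lvl y) with h | h | h
  · have := hmono x hx y hy h
    have := hv x hx; have := hv y hy; have := hρ x hx; omega
  · apply hlevel x hx y hy h
    have := hv x hx; have := hv y hy; rw [h] at *; omega
  · have := hmono y hy x hx h
    have := hv x hx; have := hv y hy; have := hρ y hy; omega

lemma Rv_inj_class (hspu : ∀ v w, v ∈ sp → w ∈ sp → d v = d w → v = w)
    (hspe : ∀ v, ∃ w ∈ sp, d w = d v) (hemb : Function.Injective emb)
    {v w : V} (hpar : d v % 2 = d w % 2)
    (hR : Rv d sp emb v = Rv d sp emb w) : v = w := by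
  have := tile_inj (T := ({v, w} : Finset V)) d (Rv d sp emb) (rho d sp emb)
    (Bl d) (fun i => (Dl d i).card)
    (fun x _ => rfl)
    (fun x _ => rho_lt hspu hspe x)
    (fun x hx y hy hlt => by
      have hx' : x = v ∨ x = w := by simpa using hx
      have hy' : y = v ∨ y = w := by simpa using hy
      apply Bl_add_Dl_le_Bl d hlt
      rcases hx' with rfl | rfl <;> rcases hy' with rfl | rfl <;> omega)
    (fun x _ y _ h1 h2 => rho_inj_level hspu hemb h1 h2)
  exact this v (by simp) w (by simp) hR

/-- counting: an injective map from `T` into `U` with `U.card = T.card` hits each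
element of `U` exactly once. -/
lemma count_eq_one {α β : Type} [DecidableEq α] [DecidableEq β] (T : Finset α) (U : Finset β)
    (g : α → β) (hinj : ∀ x ∈ T, ∀ y ∈ T, g x = g y → x = y)
    (him : ∀ x ∈ T, g x ∈ U) (hcard : U.card = T.card) :
    ∀ u ∈ U, (T.filter (fun x => g x = u)).card = 1 := by
  have himg : T.image g = U := by
    apply Finset.eq_of_subset_of_card_le
    · intro u hu; obtain ⟨x, hx, rfl⟩ := Finset.mem_image.mp hu; exact him x hx
    · rw [hcard, Finset.card_image_of_injOn (fun x hx y hy => hinj x hx y hy)]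
  intro u hu
  rw [← himg] at hu
  obtain ⟨x, hx, rfl⟩ := Finset.mem_image.mp hu
  rw [Finset.card_eq_one]
  refine ⟨x, ?_⟩
  ext y
  simp only [Finset.mem_filter, Finset.mem_singleton]
  constructor
  · rintro ⟨hy, hgy⟩; exact hinj y hy x hx hgy
  · rintro rfl; exact ⟨hx, rfl⟩

lemma modeq_window {k a b : ℕ} (h : a % k = b % k) (h1 : a < b + k) (h2 : b < a + k) : a = b := by
  obtain ⟨c, hc⟩ := (Nat.modEq_iff_dvd.mp (h : Nat.ModEq k a b))
  have hk : 0 < k := by omega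
  have hk' : (0:ℤ) < (k:ℤ) := by exact_mod_cast hk
  have h1' : (a:ℤ) < (b:ℤ) + k := by exact_mod_cast h1
  have h2' : (b:ℤ) < (a:ℤ) + k := by exact_mod_cast h2
  have hc1 : c < 1 := by nlinarith
  have hc2 : -1 < c := by nlinarith
  have hc0 : c = 0 := by omega
  rw [hc0, mul_zero] at hc
  omega
end Comb2

section MainAux
set_option linter.unusedSectionVars false
set_option maxHeartbeats 1000000
variable {V : Type} [Fintype V] [DecidableEq V]

lemma main_aux (k : ℕ) (hk : 0 < k) (G : SimpleGraph V) [DecidableRel G.Adj] (r : V)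
    (hcard : Fintype.card V = k + 1) (hT : G.IsTree)
    (a b : V) (P : G.Walk a b) (hP : P.IsPath)
    (hmax : ∀ (c d : V) (Q : G.Walk c d), Q.IsPath → Q.length ≤ P.length)
    (hcov : ∀ v : V, ∃ u ∈ P.support, G.dist v u ≤ 1)
    (hra : G.dist r a = 1) :
    ∃ f : V → ZMod k, f r = 0 ∧
      (∀ α β : ZMod k,
        ((Finset.univ.filter (fun v => f v = α)).card : ℤ) -
          ((Finset.univ.filter (fun v => f v = β)).card : ℤ) ≤ 1) ∧
      (∀ w : ZMod k,
        (G.edgeFinset.filter (fun e => edgeWeight k f e = w)).card = 1) := by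
  haveI : NeZero k := ⟨hk.ne'⟩
  have hconn := hT.isConnected
  set d : V → ℕ := fun v => G.dist a v with hd_def
  set m := P.length with hm_def
  set s : ℕ → V := fun i => P.getVert i with hs_def
  have pathlen : ∀ {x y : V} (Q : G.Walk x y), Q.IsPath → Q.length = G.dist x y :=
    fun Q hQ => path_length_eq_dist hT Q hQ
  have hd_eq : ∀ v, G.dist a v = d v := fun _ => rfl
  have hda : d a = 0 := SimpleGraph.dist_self
  have hdzero : ∀ v, d v = 0 → v = a := by
    intro v hv
    rcases SimpleGraph.dist_eq_zero_iff_eq_or_not_reachable.mp hv with h | h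
    · exact h.symm
    · exact absurd (hconn.preconnected a v) h
  have hs_d : ∀ i, i ≤ m → d (s i) = i := fun i hi => dist_getVert_eq hT P hP hi
  have hs_mem : ∀ i, i ≤ m → s i ∈ P.support := by
    intro i hi
    exact SimpleGraph.Walk.mem_support_iff_exists_getVert.mpr ⟨i, rfl, hi⟩
  have hsupp_eq : ∀ v ∈ P.support, v = s (d v) ∧ d v ≤ m := by
    intro v hv
    obtain ⟨n, hn, hnle⟩ := SimpleGraph.Walk.mem_support_iff_exists_getVert.mp hv
    have : d v = n := by rw [← hn]; exact hs_d n hnle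
    rw [this, ← hn]
    exact ⟨rfl, hnle⟩
  -- shortest path to every vertex
  have hspath : ∀ v : V, ∃ Q : G.Walk a v, Q.IsPath ∧ Q.length = d v :=
    fun v => hconn.exists_path_of_dist a v
  -- support vertices of paths from a have d = position, so d ≤ length
  have hsupp_path : ∀ {v : V} (Q : G.Walk a v), Q.IsPath → ∀ w ∈ Q.support, d w ≤ Q.length ∧
      (d w = Q.length → w = v) := by
    intro v Q hQ w hw
    obtain ⟨n, hn, hnle⟩ := SimpleGraph.Walk.mem_support_iff_exists_getVert.mp hw
    have hdw : d w = n := by rw [← hn]; exact dist_getVert_eq hT Q hQ hnle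
    refine ⟨by omega, fun h => ?_⟩
    have hnn : n = Q.length := by omega
    rw [← hn, hnn]
    exact Q.getVert_length
  have hadj_ne : ∀ u v, G.Adj u v → d u ≠ d v := by
    intro u v huv heq
    obtain ⟨Qu, hQu, hQul⟩ := hspath u
    by_cases hv : v ∈ Qu.support
    · obtain ⟨n, hn, hnle⟩ := SimpleGraph.Walk.mem_support_iff_exists_getVert.mp hv
      have hdv : d v = n := by rw [← hn]; exact dist_getVert_eq hT Qu hQu hnle
      have hnl : n = Qu.length := by omega
      have : v = u := by rw [← hn, hnl]; exact Qu.getVert_length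
      rw [this] at huv
      exact G.irrefl huv
    · have hc := concat_isPath' hQu huv hv
      have hlen := pathlen _ hc
      rw [SimpleGraph.Walk.length_concat, hd_eq] at hlen
      omega
  have hadj_step : ∀ u v, G.Adj u v → d v = d u + 1 ∨ d u = d v + 1 := by
    intro u v huv
    have h1 : G.dist a v ≤ G.dist a u + G.dist u v := hconn.dist_triangle
    have h2 : G.dist a u ≤ G.dist a v + G.dist v u := hconn.dist_triangle
    have h3 : G.dist u v = 1 := SimpleGraph.dist_eq_one_iff_adj.mpr huv
    have h4 : G.dist v u = 1 := SimpleGraph.dist_eq_one_iff_adj.mpr huv.symm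
    have h5 := hadj_ne u v huv
    rw [hd_eq, hd_eq, h3] at h1
    rw [hd_eq, hd_eq, h4] at h2
    omega
  have hpar_u : ∀ u1 u2 v, G.Adj u1 v → G.Adj u2 v → d u1 + 1 = d v → d u2 + 1 = d v →
      u1 = u2 := by
    intro u1 u2 v h1 h2 hd1 hd2
    obtain ⟨Q1, hQ1, hQ1l⟩ := hspath u1
    have hvQ : v ∉ Q1.support := by
      intro hv
      have := (hsupp_path Q1 hQ1 v hv).1
      omega
    by_cases hu2 : u2 ∈ Q1.support
    · have h := hsupp_path Q1 hQ1 u2 hu2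
      have hlen : d u2 = Q1.length := by omega
      exact (h.2 hlen).symm
    · exfalso
      have hW1 : (Q1.concat h1).IsPath := concat_isPath' hQ1 h1 hvQ
      have hu2' : u2 ∉ (Q1.concat h1).support := by
        rw [SimpleGraph.Walk.support_concat]
        intro hmem
        rcases List.mem_append.mp hmem with h | h
        · exact hu2 h
        · rw [List.mem_singleton] at h
          exact h2.ne h
      have hW2 : ((Q1.concat h1).concat h2.symm).IsPath := concat_isPath' hW1 h2.symm hu2'
      have hlen := pathlen _ hW2
      rw [SimpleGraph.Walk.length_concat, SimpleGraph.Walk.length_concat, hd_eq] at hlen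
      omega
  have hparent : ∀ v, d v ≠ 0 → d v ≤ m ∧ G.Adj (s (d v - 1)) v := by
    intro v hv0
    by_cases hvs : v ∈ P.support
    · obtain ⟨hveq, hvle⟩ := hsupp_eq v hvs
      refine ⟨hvle, ?_⟩
      have hlt : d v - 1 < m := by omega
      have hadj := P.adj_getVert_succ hlt
      have hplus : d v - 1 + 1 = d v := by omega
      rw [hplus] at hadj
      have hsv : P.getVert (d v) = v := hveq.symm
      rw [hsv] at hadj
      exact hadj
    · obtain ⟨w, hws, hvw⟩ := hcov v
      have hvwne : v ≠ w := fun h => hvs (h ▸ hws)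
      have hdvw : G.dist v w = 1 := by
        have h0 : G.dist v w ≠ 0 := by
          intro h0
          rcases SimpleGraph.dist_eq_zero_iff_eq_or_not_reachable.mp h0 with h | h
          · exact hvwne h
          · exact h (hconn.preconnected v w)
        omega
      have hadjvw : G.Adj v w := SimpleGraph.dist_eq_one_iff_adj.mp hdvw
      obtain ⟨hweq, hwle⟩ := hsupp_eq w hws
      rcases hadj_step w v hadjvw.symm with hcase | hcase
      · -- d v = d w + 1: w is the parent
        have hle : d v ≤ m := by
          by_contra hcon
          have hdw : d w = m := by omega
          have hwb : w = b := by
            rw [hweq, hdw]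
            exact P.getVert_length
          have hbv : G.Adj b v := hwb ▸ hadjvw.symm
          have hc := concat_isPath' hP hbv hvs
          have := hmax _ _ _ hc
          rw [SimpleGraph.Walk.length_concat] at this
          omega
        refine ⟨hle, ?_⟩
        have hsw : s (d v - 1) = w := by
          have hdd : d v - 1 = d w := by omega
          rw [hdd, ← hweq]
        rw [hsw]
        exact hadjvw.symm
      · -- d w = d v + 1: contradiction via two paths from a to w
        exfalso
        obtain ⟨Qv, hQv, hQvl⟩ := hspath v
        have hwQ : w ∉ Qv.support := by
          intro hw
          have := (hsupp_path Qv hQv w hw).1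
          omega
        have hp2 : (Qv.concat hadjvw).IsPath := concat_isPath' hQv hadjvw hwQ
        have hp1 : (P.takeUntil w hws).IsPath := hP.takeUntil hws
        have heqp : (⟨_, hp1⟩ : G.Path a w) = ⟨_, hp2⟩ := hT.IsAcyclic.path_unique _ _
        have hvmem : v ∈ (Qv.concat hadjvw).support := by
          rw [SimpleGraph.Walk.support_concat]
          exact List.mem_append.mpr (Or.inl Qv.end_mem_support)
        have hweq2 : (P.takeUntil w hws) = (Qv.concat hadjvw) := congrArg Subtype.val heqp
        rw [← hweq2] at hvmem
        exact hvs (P.support_takeUntil_subset hws hvmem)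
  have hd_le_m : ∀ v, d v ≤ m := by
    intro v
    by_cases h : d v = 0
    · omega
    · exact (hparent v h).1
  have hkey1 : ∀ x, G.Adj a x → x = s 1 := by
    intro x hx
    by_cases hxs : x ∈ P.support
    · obtain ⟨hxeq, _⟩ := hsupp_eq x hxs
      have hdx : d x = 1 := by
        rw [← hd_eq]
        exact SimpleGraph.dist_eq_one_iff_adj.mpr hx
      rw [hxeq, hdx]
    · exfalso
      have hc : (SimpleGraph.Walk.cons hx.symm P).IsPath := by
        rw [SimpleGraph.Walk.cons_isPath_iff]
        exact ⟨hP, hxs⟩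
      have := hmax _ _ _ hc
      rw [SimpleGraph.Walk.length_cons] at this
      omega
  have hD1 : ∀ v, d v = 1 → v = r := by
    have hradj : G.Adj a r := by
      apply SimpleGraph.dist_eq_one_iff_adj.mp
      rw [SimpleGraph.dist_comm]
      exact hra
    intro v hdv1
    have hadj : G.Adj a v := by
      apply SimpleGraph.dist_eq_one_iff_adj.mp
      rw [hd_eq]
      exact hdv1
    exact (hkey1 v hadj).trans (hkey1 r hradj).symm
  have hdr : d r = 1 := by
    show G.dist a r = 1
    rw [SimpleGraph.dist_comm]; exact hra
  -- combinatorial data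
  set emb : V → ℕ := fun v => ((Fintype.equivFin V) v : ℕ) with hemb_def
  have hemb : Function.Injective emb := by
    intro x y h
    exact (Fintype.equivFin V).injective (Fin.val_injective h)
  set sp : Finset V := P.support.toFinset with hsp_def
  have hsp_mem : ∀ v, v ∈ sp ↔ v ∈ P.support := fun v => List.mem_toFinset
  have hspu : ∀ v w, v ∈ sp → w ∈ sp → d v = d w → v = w := by
    intro v w hv hw hdvw
    have h1 := hsupp_eq v ((hsp_mem v).mp hv)
    have h2 := hsupp_eq w ((hsp_mem w).mp hw)
    rw [h1.1, h2.1, hdvw]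
  have hspe : ∀ v, ∃ w ∈ sp, d w = d v := by
    intro v
    exact ⟨s (d v), (hsp_mem _).mpr (hs_mem _ (hd_le_m v)), hs_d _ (hd_le_m v)⟩
  have hs_sp : ∀ i, i ≤ m → s i ∈ sp := fun i hi => (hsp_mem _).mpr (hs_mem i hi)
  set X : Finset V := univ.filter (fun v => d v % 2 = 1) with hX_def
  set Y : Finset V := univ.filter (fun v => d v % 2 = 0) with hY_def
  set p : ℕ := X.card with hp_def
  set q : ℕ := Y.card with hq_def
  have hX_mem : ∀ v, v ∈ X ↔ d v % 2 = 1 := by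
    intro v; rw [hX_def]; simp
  have hY_mem : ∀ v, v ∈ Y ↔ d v % 2 = 0 := by
    intro v; rw [hY_def]; simp
  have hpq : p + q = k + 1 := by
    have hYeq : Y = univ.filter (fun v => ¬ (d v % 2 = 1)) := by
      ext v
      rw [hY_mem]
      simp only [mem_filter, mem_univ, true_and]
      omega
    rw [hp_def, hq_def, hX_def, hYeq, Finset.card_filter_add_card_filter_not,
      card_univ, hcard]
  have hrX : r ∈ X := by rw [hX_def]; simp [hdr]
  have haY : a ∈ Y := by rw [hY_def]; simp [hda]
  have hp1 : 1 ≤ p := Finset.card_pos.mpr ⟨r, hrX⟩ 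
  have hq1 : 1 ≤ q := Finset.card_pos.mpr ⟨a, haY⟩
  set R : V → ℕ := Rv d sp emb with hR_def
  set fN : V → ℕ := fun v => if d v % 2 = 1 then R v else R v + (p - 1) with hfN_def
  set f : V → ZMod k := fun v => (fN v : ZMod k) with hf_def
  have hRX : ∀ v ∈ X, R v < p := by
    intro v hv
    have h := Rv_lt_class (d := d) (sp := sp) (emb := emb) hspu hspe v
    have hv1 : d v % 2 = 1 := (hX_mem v).mp hv
    have hXeq : univ.filter (fun w => d w % 2 = d v % 2) = X := by
      rw [hX_def]
      ext w
      simp only [mem_filter, mem_univ, true_and, hv1]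
    rw [hXeq] at h
    exact h
  have hRY : ∀ v ∈ Y, R v < q := by
    intro v hv
    have h := Rv_lt_class (d := d) (sp := sp) (emb := emb) hspu hspe v
    have hv1 : d v % 2 = 0 := (hY_mem v).mp hv
    have hYeq : univ.filter (fun w => d w % 2 = d v % 2) = Y := by
      rw [hY_def]
      ext w
      simp only [mem_filter, mem_univ, true_and, hv1]
    rw [hYeq] at h
    exact h
  have hfN_eq : ∀ v, fN v = if d v % 2 = 1 then R v else R v + (p - 1) := fun _ => rfl
  have hf_eq : ∀ v, f v = ((fN v : ℕ) : ZMod k) := fun _ => rfl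
  have hfNlt : ∀ v, fN v < k := by
    intro v
    rw [hfN_eq]
    by_cases h : d v % 2 = 1
    · rw [if_pos h]
      have := hRX v ((hX_mem v).mpr h)
      omega
    · rw [if_neg h]
      have := hRY v ((hY_mem v).mpr (by omega))
      omega
  have hcastinj : ∀ x y : ℕ, x < k → y < k → ((x : ZMod k) = (y : ZMod k)) → x = y := by
    intro x y hx hy h
    have := ZMod.val_cast_of_lt hx
    have := ZMod.val_cast_of_lt hy
    rw [h] at *
    omega
  -- level set facts
  have hDl0 : Dl d 0 = {a} := by
    ext v; simp only [Dl, mem_filter, mem_univ, true_and, mem_singleton]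
    exact ⟨fun h => hdzero v h, fun h => by rw [h]; exact hda⟩
  have hDl1 : Dl d 1 = {r} := by
    ext v; simp only [Dl, mem_filter, mem_univ, true_and, mem_singleton]
    exact ⟨fun h => hD1 v h, fun h => by rw [h]; exact hdr⟩
  have hNsp : ∀ j, j ≤ m → (Nspl d sp j).card + 1 = (Dl d j).card := by
    intro j hj
    have hsplit := Finset.card_filter_add_card_filter_not
      (s := Dl d j) (p := fun v => v ∈ sp)
    have h1 : (Dl d j).filter (fun v => v ∈ sp) = {s j} := by
      ext v
      simp only [Dl, mem_filter, mem_univ, true_and, mem_singleton]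
      constructor
      · rintro ⟨hdv, hvsp⟩
        exact hspu v (s j) hvsp (hs_sp j hj) (by rw [hdv, hs_d j hj])
      · rintro rfl
        exact ⟨hs_d j hj, hs_sp j hj⟩
    have h2 : (Dl d j).filter (fun v => ¬ v ∈ sp) = Nspl d sp j := by
      ext v
      simp only [Dl, Nspl, mem_filter, mem_univ, true_and]
    rw [h1, h2, Finset.card_singleton] at hsplit
    omega
  -- root label
  have hm1 : 1 ≤ m := by
    have := hd_le_m r
    omega
  have hrsp : r ∈ sp := by
    have : s 1 = r := hD1 (s 1) (hs_d 1 hm1)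
    rw [← this]
    exact hs_sp 1 hm1
  have hfr : f r = 0 := by
    have hfN0 : fN r = 0 := by
      rw [hfN_eq, if_pos (by rw [hdr])]
      show Rv d sp emb r = 0
      rw [Rv]
      have hrho : rho d sp emb r = 0 := by
        rw [rho, if_pos hrsp, hdr]
        have := hNsp 1 hm1
        rw [hDl1, Finset.card_singleton] at this
        omega
      have hBl : Bl d 1 = 0 := by
        rw [Bl, Blp]
        simp
      rw [hdr, hrho, hBl]
    rw [hf_eq, hfN0]
    simp
  have hpk : p ≤ k := by omega
  have hvalcast : ∀ ℓ : ZMod k, ((ℓ.val : ℕ) : ZMod k) = ℓ := fun ℓ => ZMod.natCast_rightInverse ℓ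
  have hcnt : ∀ ℓ : ZMod k, 1 ≤ (univ.filter (fun v => f v = ℓ)).card ∧
      (univ.filter (fun v => f v = ℓ)).card ≤ 2 := by
    intro ℓ
    have hval : ℓ.val < k := ZMod.val_lt ℓ
    -- X part
    have hXf : X.filter (fun v => f v = ℓ) = X.filter (fun v => R v = ℓ.val) := by
      apply Finset.filter_congr
      intro v hv
      have hv1 : d v % 2 = 1 := (hX_mem v).mp hv
      have hfv : f v = ((R v : ℕ) : ZMod k) := by rw [hf_eq, hfN_eq, if_pos hv1]
      rw [hfv]
      constructor
      · intro h
        apply hcastinj _ _ (lt_of_lt_of_le (hRX v hv) hpk) hval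
        rw [h, hvalcast]
      · intro h
        rw [h, hvalcast]
    have hXcnt : (X.filter (fun v => f v = ℓ)).card = if ℓ.val < p then 1 else 0 := by
      rw [hXf]
      by_cases hlt : ℓ.val < p
      · rw [if_pos hlt]
        exact count_eq_one X (range p) R
          (fun x hx y hy hxy => Rv_inj_class hspu hspe hemb
            (by rw [(hX_mem x).mp hx, (hX_mem y).mp hy]) hxy)
          (fun x hx => Finset.mem_range.mpr (hRX x hx))
          (by rw [Finset.card_range, hp_def]) ℓ.val (Finset.mem_range.mpr hlt)
      · rw [if_neg hlt, Finset.card_eq_zero, Finset.filter_eq_empty_iff]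
        intro v hv hRv
        have := hRX v hv
        omega
    -- Y part
    have hYf : Y.filter (fun v => f v = ℓ) = Y.filter (fun v => R v + (p-1) = ℓ.val) := by
      apply Finset.filter_congr
      intro v hv
      have hv1 : d v % 2 = 0 := (hY_mem v).mp hv
      have hfv : f v = ((R v + (p-1) : ℕ) : ZMod k) := by
        rw [hf_eq, hfN_eq, if_neg (by omega)]
      rw [hfv]
      constructor
      · intro h
        apply hcastinj _ _ (by have := hRY v hv; omega) hval
        rw [h, hvalcast]
      · intro h
        rw [h, hvalcast]
    have hYcnt : (Y.filter (fun v => f v = ℓ)).card = if p - 1 ≤ ℓ.val then 1 else 0 := by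
      rw [hYf]
      by_cases hle : p - 1 ≤ ℓ.val
      · rw [if_pos hle]
        have hYf2 : Y.filter (fun v => R v + (p-1) = ℓ.val)
            = Y.filter (fun v => R v = ℓ.val - (p-1)) := by
          apply Finset.filter_congr
          intro v _
          constructor <;> intro h2 <;> omega
        rw [hYf2]
        exact count_eq_one Y (range q) R
          (fun x hx y hy hxy => Rv_inj_class hspu hspe hemb
            (by rw [(hY_mem x).mp hx, (hY_mem y).mp hy]) hxy)
          (fun x hx => Finset.mem_range.mpr (hRY x hx))
          (by rw [Finset.card_range, hq_def]) (ℓ.val - (p-1))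
          (Finset.mem_range.mpr (by omega))
      · rw [if_neg hle, Finset.card_eq_zero, Finset.filter_eq_empty_iff]
        intro v hv hRv
        omega
    -- combine
    have hsplitc : univ.filter (fun v => f v = ℓ)
        = X.filter (fun v => f v = ℓ) ∪ Y.filter (fun v => f v = ℓ) := by
      ext v
      simp only [mem_filter, mem_union, mem_univ, true_and]
      have hvor : v ∈ X ∨ v ∈ Y := by
        rw [hX_mem, hY_mem]
        omega
      constructor
      · intro h
        rcases hvor with hv | hv
        · exact Or.inl ⟨hv, h⟩
        · exact Or.inr ⟨hv, h⟩
      · rintro (⟨_, h⟩ | ⟨_, h⟩) <;> exact h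
    have hdisj : Disjoint (X.filter (fun v => f v = ℓ)) (Y.filter (fun v => f v = ℓ)) := by
      rw [Finset.disjoint_left]
      intro v hv hv2
      have h1 := (hX_mem v).mp (Finset.mem_of_mem_filter v hv)
      have h2 := (hY_mem v).mp (Finset.mem_of_mem_filter v hv2)
      omega
    rw [hsplitc, Finset.card_union_of_disjoint hdisj, hXcnt, hYcnt]
    split_ifs <;> omega
  refine ⟨f, hfr, ?_, ?_⟩
  · intro α β
    have h1 := (hcnt α).2
    have h2 := (hcnt β).1
    omega
  · intro w
    have hEW : ∀ x y : V, edgeWeight k f (Sym2.mk x y) = f x + f y := fun _ _ => rfl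
    set T : Finset V := univ.filter (fun v => ¬ d v = 0) with hT_def
    have hT0 : ∀ v : V, v ∈ T ↔ ¬ d v = 0 := by
      intro v; rw [hT_def]; simp
    have hTcard : T.card = k := by
      have hfa : univ.filter (fun v => d v = 0) = {a} := by
        ext v
        simp only [mem_filter, mem_univ, true_and, mem_singleton]
        exact ⟨hdzero v, fun h => by rw [h]; exact hda⟩
      have hsum := Finset.card_filter_add_card_filter_not
        (s := (univ : Finset V)) (p := fun v => d v = 0)
      rw [hfa, Finset.card_singleton, card_univ, hcard, ← hT_def] at hsum
      omega
    set gE : V → ZMod k := fun v => ((R (s (d v - 1)) + R v + (p - 1) : ℕ) : ZMod k)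
      with hgE_def
    have hgE_eq : ∀ v, gE v = ((R (s (d v - 1)) + R v + (p - 1) : ℕ) : ZMod k) :=
      fun _ => rfl
    have hpar_eq : ∀ u v, G.Adj u v → d u + 1 = d v → u = s (d v - 1) := by
      intro u v huv hst
      have h := hparent v (by omega)
      refine hpar_u u (s (d v - 1)) v huv h.2 hst ?_
      rw [hs_d (d v - 1) (by omega)]
      omega
    have hwsum : ∀ v, ¬ d v = 0 → f (s (d v - 1)) + f v = gE v := by
      intro v hv
      have hble : d v - 1 ≤ m := by have := hd_le_m v; omega
      have hds : d (s (d v - 1)) = d v - 1 := hs_d _ hble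
      rw [hgE_eq, hf_eq, hf_eq, hfN_eq, hfN_eq]
      by_cases hodd : d v % 2 = 1
      · rw [if_pos hodd, if_neg (by rw [hds]; omega)]
        push_cast
        ring
      · rw [if_neg hodd, if_pos (by rw [hds]; omega)]
        push_cast
        ring
    have hstep1 : (T.filter (fun v => gE v = w)).card
        = (G.edgeFinset.filter (fun e => edgeWeight k f e = w)).card := by
      apply Finset.card_bij (fun v _ => Sym2.mk (s (d v - 1)) v)
      · intro v hv
        obtain ⟨hvT, hgw⟩ := Finset.mem_filter.mp hv
        have hv0 : ¬ d v = 0 := (hT0 v).mp hvT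
        rw [Finset.mem_filter]
        refine ⟨?_, ?_⟩
        · rw [SimpleGraph.mem_edgeFinset, SimpleGraph.mem_edgeSet]
          exact (hparent v hv0).2
        · rw [hEW, hwsum v hv0]
          exact hgw
      · intro v1 hv1 v2 hv2 heq
        rw [Sym2.eq_iff] at heq
        rcases heq with ⟨h1, h2⟩ | ⟨h1, h2⟩
        · exact h2
        · obtain ⟨hv1T, _⟩ := Finset.mem_filter.mp hv1
          obtain ⟨hv2T, _⟩ := Finset.mem_filter.mp hv2
          have h10 : ¬ d v1 = 0 := (hT0 v1).mp hv1T
          have h20 : ¬ d v2 = 0 := (hT0 v2).mp hv2T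
          have hd1 : d v1 = d v2 - 1 := by
            rw [h2, hs_d _ (by have := hd_le_m v2; omega)]
          have hd2 : d v2 = d v1 - 1 := by
            rw [← h1, hs_d _ (by have := hd_le_m v1; omega)]
          omega
      · intro e he
        obtain ⟨heEF, hew⟩ := Finset.mem_filter.mp he
        rw [SimpleGraph.mem_edgeFinset] at heEF
        revert heEF hew
        induction e using Sym2.ind with
        | _ u v =>
          intro heEF hew
          rw [SimpleGraph.mem_edgeSet] at heEF
          rcases hadj_step u v heEF with hc | hc
          · have hu : u = s (d v - 1) := hpar_eq u v heEF (by omega)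
            refine ⟨v, ?_, ?_⟩
            · rw [Finset.mem_filter]
              refine ⟨(hT0 v).mpr (by omega), ?_⟩
              rw [← hwsum v (by omega), ← hu]
              rw [hEW] at hew
              exact hew
            · rw [← hu]
          · have hvpar : v = s (d u - 1) := hpar_eq v u heEF.symm (by omega)
            refine ⟨u, ?_, ?_⟩
            · rw [Finset.mem_filter]
              refine ⟨(hT0 u).mpr (by omega), ?_⟩
              rw [← hwsum u (by omega), ← hvpar]
              rw [hEW] at hew
              rw [add_comm]
              exact hew
            · rw [← hvpar]
              exact Sym2.eq_swap
    have hSlmono : ∀ i j, i ≤ j → Sl d i ≤ Sl d j := by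
      intro i j hij
      rw [Sl_eq_card, Sl_eq_card]
      apply Finset.card_le_card
      intro v hv
      simp only [mem_filter, mem_univ, true_and] at hv ⊢
      omega
    have hSl1 : Sl d 1 = 1 := by
      rw [Sl, Finset.sum_range_one, hDl0, Finset.card_singleton]
    have hSlub : ∀ j, Sl d j ≤ k + 1 := by
      intro j
      rw [Sl_eq_card]
      calc (univ.filter (fun v => d v < j)).card ≤ (univ : Finset V).card :=
            Finset.card_filter_le _ _
        _ = k + 1 := by rw [card_univ, hcard]
    have hWid : ∀ v, ¬ d v = 0 → R (s (d v - 1)) + R v + (p - 1) + 1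
        = (Sl d (d v) + (p - 1)) + rho d sp emb v := by
      intro v hv
      have hile : d v ≤ m := hd_le_m v
      have hds : d (s (d v - 1)) = d v - 1 := hs_d _ (by omega)
      have hsp' : s (d v - 1) ∈ sp := hs_sp _ (by omega)
      have h1 : R (s (d v - 1)) = Bl d (d v - 1) + (Nspl d sp (d v - 1)).card := by
        show Rv d sp emb (s (d v - 1)) = _
        rw [Rv, rho, if_pos hsp', hds]
      have h2 : R v = Bl d (d v) + rho d sp emb v := rfl
      have hN : (Nspl d sp (d v - 1)).card + 1 = (Dl d (d v - 1)).card :=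
        hNsp (d v - 1) (by omega)
      have hBB : Bl d (d v - 1) + Bl d ((d v - 1) + 1) = Sl d (d v - 1) :=
        Bl_add_Bl_succ d (d v - 1)
      have hSS : Sl d ((d v - 1) + 1) = Sl d (d v - 1) + (Dl d (d v - 1)).card :=
        Finset.sum_range_succ _ _
      have hplus : (d v - 1) + 1 = d v := by omega
      rw [hplus] at hBB hSS
      omega
    have hWlb : ∀ v, ¬ d v = 0 → p ≤ (Sl d (d v) + (p - 1)) + rho d sp emb v := by
      intro v hv
      have := hSlmono 1 (d v) (by omega)
      omega
    have hWub : ∀ v, ¬ d v = 0 → (Sl d (d v) + (p - 1)) + rho d sp emb v ≤ k + p - 1 := by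
      intro v hv
      have h1 : rho d sp emb v < (Dl d (d v)).card := rho_lt hspu hspe v
      have h2 : Sl d (d v + 1) = Sl d (d v) + (Dl d (d v)).card := Finset.sum_range_succ _ _
      have h3 := hSlub (d v + 1)
      omega
    have hinj : ∀ x ∈ T, ∀ y ∈ T, gE x = gE y → x = y := by
      intro x hx y hy hxy
      have hx0 : ¬ d x = 0 := (hT0 x).mp hx
      have hy0 : ¬ d y = 0 := (hT0 y).mp hy
      rw [hgE_eq, hgE_eq] at hxy
      have hmod : (R (s (d x - 1)) + R x + (p - 1)) % k
          = (R (s (d y - 1)) + R y + (p - 1)) % k :=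
        (ZMod.natCast_eq_natCast_iff' _ _ _).mp hxy
      have hmod1 : (R (s (d x - 1)) + R x + (p - 1) + 1) % k
          = (R (s (d y - 1)) + R y + (p - 1) + 1) % k :=
        Nat.ModEq.add_right 1 hmod
      have hWx := hWid x hx0
      have hWy := hWid y hy0
      have hlbx := hWlb x hx0
      have hlby := hWlb y hy0
      have hubx := hWub x hx0
      have huby := hWub y hy0
      have heqN : R (s (d x - 1)) + R x + (p - 1) + 1
          = R (s (d y - 1)) + R y + (p - 1) + 1 :=
        modeq_window hmod1 (by omega) (by omega)
      rw [hWx, hWy] at heqN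
      exact tile_inj T d (fun u => (Sl d (d u) + (p - 1)) + rho d sp emb u) (rho d sp emb)
        (fun i => Sl d i + (p - 1)) (fun i => (Dl d i).card)
        (fun u _ => rfl)
        (fun u _ => rho_lt hspu hspe u)
        (fun u _ u' _ hlt => by
          show Sl d (d u) + (p - 1) + (Dl d (d u)).card ≤ Sl d (d u') + (p - 1)
          have h1 : Sl d (d u + 1) = Sl d (d u) + (Dl d (d u)).card :=
            Finset.sum_range_succ _ _
          have h2 : Sl d (d u + 1) ≤ Sl d (d u') := hSlmono _ _ (by omega)
          omega)
        (fun u _ u' _ h1 h2 => rho_inj_level hspu hemb h1 h2)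
        x hx y hy heqN
    have hcount := count_eq_one T (univ : Finset (ZMod k)) gE hinj
      (fun x _ => Finset.mem_univ _)
      (by rw [Finset.card_univ, ZMod.card, hTcard]) w (Finset.mem_univ w)
    rw [← hstep1]
    exact hcount

end MainAux
/-- If `T` is a rooted caterpillar with `k` vertices (not counting the root `r`),
whose root `r` is at distance 1 from an endpoint of a maximum-length path `P`
witnessing the caterpillar property, then `T` admits a labeling by `ZMod k` with the
root labeled `0`, in which each label appears on at most one more vertex than any
other label and every weight appears on exactly one edge. -/
theorem rooted_caterpillar_labeling {V : Type} [Fintype V] [DecidableEq V] (k : ℕ)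
    (hk : 0 < k) (G : SimpleGraph V) [DecidableRel G.Adj] (r : V)
    (hcard : Fintype.card V = k + 1)
    (hT : G.IsTree)
    (hcat : ∃ (a b : V) (P : G.Walk a b), P.IsPath ∧
      (∀ (c d : V) (Q : G.Walk c d), Q.IsPath → Q.length ≤ P.length) ∧
      (∀ v : V, ∃ u ∈ P.support, G.dist v u ≤ 1) ∧
      (G.dist r a = 1 ∨ G.dist r b = 1)) :
    ∃ f : V → ZMod k, f r = 0 ∧
      (∀ a b : ZMod k,
        ((Finset.univ.filter (fun v => f v = a)).card : ℤ) -
          ((Finset.univ.filter (fun v => f v = b)).card : ℤ) ≤ 1) ∧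
      (∀ w : ZMod k,
        (G.edgeFinset.filter (fun e => edgeWeight k f e = w)).card = 1) := by
  obtain ⟨a, b, P, hP, hmax, hcov, hr⟩ := hcat
  rcases hr with h | h
  · exact main_aux k hk G r hcard hT a b P hP hmax hcov h
  · refine main_aux k hk G r hcard hT b a P.reverse
      ((SimpleGraph.Walk.isPath_reverse_iff P).mpr hP) ?_ ?_ h
    · intro c dd Q hQ
      rw [SimpleGraph.Walk.length_reverse]
      exact hmax c dd Q hQ
    · intro v
      obtain ⟨u, hu, hdu⟩ := hcov v
      exact ⟨u, by rwa [SimpleGraph.Walk.support_reverse, List.mem_reverse], hdu⟩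
end

section
/- Let k > 0 and m be positive integers. If every tree on mk vertices is k-cordial, then every tree T with mk ≤ |V(T)| ≤ mk + ⌊k/2⌋ + 1 is k-cordial. -/
section Aux

open Finset SimpleGraph

/-! ### Arithmetic of exactly balanced counting functions -/

/-- Exactly balanced counts: every value is `q` or `q+1`, and exactly `r` values are `q+1`. -/
def Bal (k : ℕ) [NeZero k] (q r : ℕ) (c : ZMod k → ℕ) : Prop :=
  (∀ a, c a = q ∨ c a = q + 1) ∧ (Finset.univ.filter (fun a => c a = q + 1)).card = r

variable {k : ℕ} [NeZero k]

lemma Bal.diff_le {q r : ℕ} {c : ZMod k → ℕ} (h : Bal k q r c) (a b : ZMod k) :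
    (c a : ℤ) - (c b : ℤ) ≤ 1 := by
  rcases h.1 a with ha | ha <;> rcases h.1 b with hb | hb <;> simp [ha, hb]

lemma Bal.increment {q r : ℕ} {c : ZMod k → ℕ} (h : Bal k q r c) {a0 : ZMod k}
    (ha0 : c a0 = q) : Bal k q (r + 1) (fun a => c a + if a0 = a then 1 else 0) := by
  constructor
  · intro a
    by_cases hh : a0 = a
    · subst hh; right; simp [ha0]
    · simpa [hh] using h.1 a
  · have hins : (Finset.univ.filter (fun a => (c a + if a0 = a then 1 else 0) = q + 1))
        = insert a0 (Finset.univ.filter (fun a => c a = q + 1)) := by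
      ext a
      by_cases hh : a0 = a
      · subst hh; simp [ha0]
      · have hne : ¬ a = a0 := fun h' => hh h'.symm
        simp [hh, hne]
    rw [hins, Finset.card_insert_of_notMem (by simp [ha0]), h.2]

lemma Bal.up {q : ℕ} {c : ZMod k → ℕ} (h : Bal k q k c) : Bal k (q + 1) 0 c := by
  have hall : ∀ a, c a = q + 1 := by
    intro a
    have huniv : (Finset.univ.filter (fun a : ZMod k => c a = q + 1)) = Finset.univ := by
      apply Finset.eq_univ_of_card
      rw [h.2]; exact (ZMod.card k).symm
    have := huniv ▸ Finset.mem_univ a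
    exact (Finset.mem_filter.mp this).2
  exact ⟨fun a => Or.inl (hall a), by simp [hall]⟩

/-- If counts pairwise differ by at most 1 and sum to `k*q + r` with `r < k`,
then they are exactly balanced. -/
lemma bal_of_sum {q r : ℕ} {c : ZMod k → ℕ}
    (hdiff : ∀ a b, (c a : ℤ) - (c b : ℤ) ≤ 1)
    (hsum : ∑ a, c a = k * q + r) (hr : r < k) : Bal k q r c := by
  obtain ⟨a0, -, hmin⟩ := Finset.exists_min_image Finset.univ c ⟨0, Finset.mem_univ 0⟩
  set lo := c a0 with hlo
  have hub : ∀ a, c a ≤ lo + 1 := by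
    intro a
    have := hdiff a a0
    omega
  have hlb : ∀ a, lo ≤ c a := fun a => hmin a (Finset.mem_univ a)
  set t := (Finset.univ.filter (fun a : ZMod k => c a = lo + 1)).card with ht
  have hsum2 : ∑ a, c a = k * lo + t := by
    have : ∑ a, c a = ∑ a, (lo + if c a = lo + 1 then 1 else 0) := by
      apply Finset.sum_congr rfl
      intro a _
      have h1 := hub a; have h2 := hlb a
      by_cases hh : c a = lo + 1 <;> simp [hh] <;> omega
    rw [this, Finset.sum_add_distrib, Finset.sum_const, Finset.card_univ, ZMod.card,
      smul_eq_mul, Finset.sum_boole, ht]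
    simp
  have htk : t ≤ k := by
    have := Finset.card_filter_le (Finset.univ : Finset (ZMod k)) (fun a => c a = lo + 1)
    simpa [Finset.card_univ, ZMod.card] using this
  have htlt : t < k := by
    rcases lt_or_eq_of_le htk with h' | h'
    · exact h'
    · exfalso
      have huniv : (Finset.univ.filter (fun a : ZMod k => c a = lo + 1)) = Finset.univ := by
        apply Finset.eq_univ_of_card
        rw [← ht, h']; exact (ZMod.card k).symm
      have hm := huniv ▸ Finset.mem_univ a0
      have := (Finset.mem_filter.mp hm).2
      omega
  have hk : 0 < k := Nat.pos_of_ne_zero (NeZero.ne k)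
  have h1 : k * lo + t = k * q + r := by rw [← hsum2, hsum]
  have key : ∀ x y u v : ℕ, u < k → v < k → k * x + u = k * y + v → x = y ∧ u = v := by
    intro x y u v hu hv heq
    have hx : x = y := by
      rcases Nat.lt_trichotomy x y with h | h | h
      · exfalso
        have : k * x + u < k * y + v := by
          calc k * x + u < k * x + k := by omega
            _ = k * (x + 1) := by ring
            _ ≤ k * y := Nat.mul_le_mul_left k h
            _ ≤ k * y + v := Nat.le_add_right _ _
        omega
      · exact h
      · exfalso
        have : k * y + v < k * x + u := by
          calc k * y + v < k * y + k := by omega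
            _ = k * (y + 1) := by ring
            _ ≤ k * x := Nat.mul_le_mul_left k h
            _ ≤ k * x + u := Nat.le_add_right _ _
        omega
    subst hx
    exact ⟨rfl, Nat.add_left_cancel heq⟩
  obtain ⟨h1, h2⟩ := key lo q t r htlt hr h1
  constructor
  · intro a
    have := hub a; have := hlb a
    omega
  · rw [← h2, ht, h1]

/-! ### Graph-theoretic lemmas about deleting a leaf from a tree -/

variable {V : Type} [Fintype V] [DecidableEq V] {G : SimpleGraph V} [DecidableRel G.Adj]

instance instDecInduce (G : SimpleGraph V) [DecidableRel G.Adj] (s : Set V)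
    [DecidablePred (· ∈ s)] : DecidableRel (G.induce s).Adj :=
  fun a b => (inferInstance : DecidableRel G.Adj) a.1 b.1

/-- A finite tree with at least two vertices has a leaf. -/
lemma tree_exists_leaf (hG : G.IsTree) (h2 : 2 ≤ Fintype.card V) :
    ∃ v, G.degree v = 1 := by
  by_contra hno
  push_neg at hno
  have hdeg : ∀ v, 2 ≤ G.degree v := by
    intro v
    have hpos : 0 < G.degree v := by
      rw [G.degree_pos_iff_exists_adj]
      obtain ⟨w, hw⟩ := Fintype.exists_ne_of_one_lt_card (by omega) v
      obtain ⟨p⟩ := hG.isConnected.preconnected v w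
      cases p with
      | nil => exact absurd rfl hw.symm
      | cons h _ => exact ⟨_, h⟩
    have := hno v
    omega
  have hsum := G.sum_degrees_eq_twice_card_edges
  have hcard := hG.card_edgeFinset
  have : 2 * Fintype.card V ≤ ∑ v, G.degree v := by
    calc 2 * Fintype.card V = ∑ _v : V, 2 := by simp [mul_comm]
      _ ≤ ∑ v, G.degree v := Finset.sum_le_sum fun v _ => hdeg v
  omega

/-- An interior vertex of a path cannot be a leaf. -/
lemma leaf_not_interior {v : V} (hdeg : G.degree v = 1) :
    ∀ {x y : V} (p : G.Walk x y), p.IsPath → x ≠ v → y ≠ v → v ∉ p.support := by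
  have huniq : ∀ a b, G.Adj v a → G.Adj v b → a = b := by
    intro a b ha hb
    have h1 : (G.neighborFinset v).card ≤ 1 := le_of_eq hdeg
    exact Finset.card_le_one.mp h1 a (by simpa using ha) b (by simpa using hb)
  intro x y p
  induction p with
  | nil =>
    intro _ hx _ hs
    simp only [SimpleGraph.Walk.support_nil, List.mem_singleton] at hs
    exact hx hs.symm
  | @cons x b y h q ih =>
    intro hp hx hy hs
    rw [SimpleGraph.Walk.support_cons, List.mem_cons] at hs
    rcases hs with hs | hs
    · exact hx hs.symm
    · by_cases hb : b = v
      · subst hb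
        cases q with
        | nil => exact hy rfl
        | @cons _ z _ h2 q2 =>
          have hxz : x = z := huniq x z h.symm h2
          have hxnot : x ∉ (SimpleGraph.Walk.cons h2 q2).support :=
            ((SimpleGraph.Walk.cons_isPath_iff h _).mp hp).2
          apply hxnot
          rw [SimpleGraph.Walk.support_cons]
          refine List.mem_cons_of_mem _ ?_
          rw [hxz]
          exact q2.start_mem_support
      · exact ih ((SimpleGraph.Walk.cons_isPath_iff h q).mp hp).1 hb hy hs

/-- Walks staying inside `s` lift to reachability in the induced graph. -/
lemma reachable_induce_of_walk {s : Set V} :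
    ∀ {x y : V} (p : G.Walk x y) (hx : x ∈ s) (hy : y ∈ s),
      (∀ w ∈ p.support, w ∈ s) → (G.induce s).Reachable ⟨x, hx⟩ ⟨y, hy⟩ := by
  intro x y p
  induction p with
  | nil => intro hx _ _; exact SimpleGraph.Reachable.refl _
  | @cons x b y h q ih =>
    intro hx hy hall
    have hb : b ∈ s := hall b (by simp)
    have h1 : (G.induce s).Adj ⟨x, hx⟩ ⟨b, hb⟩ := h
    exact h1.reachable.trans (ih hb hy fun w hw => hall w (by simp [hw]))

/-- Deleting a leaf from a tree yields a tree. -/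
lemma tree_delete_leaf (hG : G.IsTree) (h2 : 2 ≤ Fintype.card V) {v : V}
    (hdeg : G.degree v = 1) : (G.induce {w | w ≠ v}).IsTree := by
  constructor
  · rw [SimpleGraph.connected_iff]
    constructor
    · rintro ⟨x, hx⟩ ⟨y, hy⟩
      obtain ⟨p, hp, -⟩ := hG.existsUnique_path x y
      have hvp : v ∉ p.support := leaf_not_interior hdeg p hp hx hy
      exact reachable_induce_of_walk p hx hy fun w hw => fun hwv => hvp (hwv ▸ hw)
    · obtain ⟨w, hw⟩ := Fintype.exists_ne_of_one_lt_card (by omega) v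
      exact ⟨⟨w, hw⟩⟩
  · intro a c hc
    have := hG.IsAcyclic (c.map (SimpleGraph.Embedding.induce {w | w ≠ v}).toHom)
    exact this (hc.map Subtype.val_injective)

/-! ### Counting lemmas for extending a labeling over a new leaf -/

lemma count_vertex {k : ℕ} (f : V → ZMod k) (v : V) (a : ZMod k) :
    (Finset.univ.filter (fun w => f w = a)).card
      = ((Finset.univ : Finset ↥{w : V | w ≠ v}).filter (fun w => f w.1 = a)).card
        + (if f v = a then 1 else 0) := by
  have h1 : (Finset.univ : Finset V) = insert v (Finset.univ.erase v) :=
    (Finset.insert_erase (Finset.mem_univ v)).symm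
  have h2 : ((Finset.univ.erase v).filter (fun w => f w = a)).card
      = ((Finset.univ : Finset ↥{w : V | w ≠ v}).filter (fun w => f w.1 = a)).card := by
    apply Finset.card_bij
      (fun w hw => (⟨w, Finset.ne_of_mem_erase (Finset.mem_of_mem_filter w hw)⟩ : ↥{w : V | w ≠ v}))
    · intro w hw
      simp only [Finset.mem_filter, Finset.mem_univ, true_and]
      exact (Finset.mem_filter.mp hw).2
    · intro w1 h1 w2 h2 h
      simpa using congrArg Subtype.val h
    · intro w hw
      refine ⟨w.1, ?_, rfl⟩
      simp only [Finset.mem_filter, Finset.mem_erase, Finset.mem_univ, true_and, and_true]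
      exact ⟨w.2, (Finset.mem_filter.mp hw).2⟩
  rw [h1, Finset.filter_insert]
  by_cases hfv : f v = a
  · rw [if_pos hfv, Finset.card_insert_of_notMem (by simp), h2, if_pos hfv]
  · rw [if_neg hfv, h2, if_neg hfv]; simp

lemma edgeWeight_map {k : ℕ} {v : V} (f : V → ZMod k) (f' : ↥{w : V | w ≠ v} → ZMod k)
    (hagree : ∀ w : ↥{w : V | w ≠ v}, f w.1 = f' w) (e : Sym2 ↥{w : V | w ≠ v}) :
    edgeWeight k f (Sym2.map Subtype.val e) = edgeWeight k f' e := by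
  refine Sym2.inductionOn e ?_
  intro a b
  simp [edgeWeight, hagree]

lemma edgeFinset_delete_leaf {v u : V} (hvu : G.Adj v u) (hu : ∀ w, G.Adj v w → w = u) :
    G.edgeFinset = insert s(v, u)
      (((G.induce {w | w ≠ v}).edgeFinset).image (Sym2.map Subtype.val)) := by
  ext e
  refine Sym2.inductionOn e ?_
  intro a b
  simp only [mem_edgeFinset, mem_edgeSet, Finset.mem_insert, Finset.mem_image]
  constructor
  · intro hab
    by_cases hav : a = v
    · subst hav; left; rw [hu b hab]
    · by_cases hbv : b = v
      · subst hbv; left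
        rw [hu a hab.symm, Sym2.eq_swap]
      · right
        refine ⟨s(⟨a, hav⟩, ⟨b, hbv⟩), ?_, ?_⟩
        · have : (G.induce {w | w ≠ v}).Adj ⟨a, hav⟩ ⟨b, hbv⟩ := hab
          exact (SimpleGraph.mem_edgeSet _).mpr this
        · simp
  · rintro (h | ⟨e', he', hmap⟩)
    · rw [← mem_edgeSet, h, mem_edgeSet]; exact hvu
    · rw [← mem_edgeSet, ← hmap]
      revert he'
      refine Sym2.inductionOn e' ?_
      intro a' b' he'
      simpa using he'

lemma leaf_edge_not_mem {v u : V} :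
    s(v, u) ∉ ((G.induce {w | w ≠ v}).edgeFinset).image (Sym2.map Subtype.val) := by
  intro h
  obtain ⟨e', -, hmap⟩ := Finset.mem_image.mp h
  have hv : v ∈ Sym2.map Subtype.val e' := by rw [hmap]; simp
  obtain ⟨w, -, hw⟩ := Sym2.mem_map.mp hv
  exact w.2 hw

lemma count_edge {k : ℕ} {v u : V} (hvu : G.Adj v u) (hu : ∀ w, G.Adj v w → w = u)
    (f : V → ZMod k) (f' : ↥{w : V | w ≠ v} → ZMod k)
    (hagree : ∀ w : ↥{w : V | w ≠ v}, f w.1 = f' w) (a : ZMod k) :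
    (G.edgeFinset.filter (fun e => edgeWeight k f e = a)).card
      = (((G.induce {w | w ≠ v}).edgeFinset).filter (fun e => edgeWeight k f' e = a)).card
        + (if f v + f u = a then 1 else 0) := by
  rw [edgeFinset_delete_leaf hvu hu, Finset.filter_insert]
  have hinj : Function.Injective (Sym2.map (Subtype.val : ↥{w : V | w ≠ v} → V)) :=
    Sym2.map.injective Subtype.val_injective
  have himg : ((((G.induce {w | w ≠ v}).edgeFinset).image (Sym2.map Subtype.val)).filter
        (fun e => edgeWeight k f e = a)).card
      = (((G.induce {w | w ≠ v}).edgeFinset).filter (fun e => edgeWeight k f' e = a)).card := by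
    rw [Finset.filter_image]
    rw [Finset.card_image_of_injective _ hinj]
    congr 1
    apply Finset.filter_congr
    intro e _
    rw [edgeWeight_map f f' hagree]
  have hw : edgeWeight k f s(v, u) = f v + f u := by simp [edgeWeight]
  by_cases hcase : f v + f u = a
  · rw [if_pos (hw.trans hcase), Finset.card_insert_of_notMem
      (fun hmem => leaf_edge_not_mem (Finset.mem_of_mem_filter _ hmem)), himg, if_pos hcase]
  · rw [if_neg (fun hc => hcase (hw ▸ hc)), himg, if_neg hcase]; simp

end Aux

/-- Hovey's lemma: for positive integers `k` and `m`, if every tree on `m * k`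
vertices is `k`-cordial, then every tree `T` with
`m * k ≤ |V(T)| ≤ m * k + ⌊k / 2⌋ + 1` is `k`-cordial. -/
theorem hovey_lemma (k m : ℕ) (hk : 0 < k) (hm : 0 < m)
    (H : ∀ (V : Type) [Fintype V] [DecidableEq V]
        (G : SimpleGraph V) [DecidableRel G.Adj],
      G.IsTree → Fintype.card V = m * k → ∃ f : V → ZMod k, IsCordialLabeling k G f) :
    ∀ (V : Type) [Fintype V] [DecidableEq V]
        (G : SimpleGraph V) [DecidableRel G.Adj],
      G.IsTree → m * k ≤ Fintype.card V → Fintype.card V ≤ m * k + k / 2 + 1 →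
      ∃ f : V → ZMod k, IsCordialLabeling k G f := by
  haveI : NeZero k := ⟨hk.ne'⟩
  -- Key strengthened statement, by induction on the excess `j`.
  have key : ∀ j : ℕ, 2 * j ≤ k + 2 →
      ∀ (V : Type) [Fintype V] [DecidableEq V] (G : SimpleGraph V) [DecidableRel G.Adj],
        G.IsTree → Fintype.card V = m * k + j →
        ∃ f : V → ZMod k,
          Bal k m j (fun a => (Finset.univ.filter (fun v => f v = a)).card) ∧
          (if j = 0 then
            Bal k (m - 1) (k - 1)
              (fun a => (G.edgeFinset.filter (fun e => edgeWeight k f e = a)).card)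
          else
            Bal k m (j - 1)
              (fun a => (G.edgeFinset.filter (fun e => edgeWeight k f e = a)).card)) := by
    intro j
    induction j with
    | zero =>
      intro _ V _ _ G _ hG hcard
      obtain ⟨f, hfV, hfE⟩ := H V G hG (by omega)
      have hsumV : ∑ a : ZMod k, (Finset.univ.filter (fun v => f v = a)).card
          = Fintype.card V := by
        rw [← Finset.card_univ]
        exact (Finset.card_eq_sum_card_fiberwise (fun x _ => Finset.mem_univ (f x))).symm
      have hsumE : ∑ a : ZMod k,
          (G.edgeFinset.filter (fun e => edgeWeight k f e = a)).card
          = Fintype.card V - 1 := by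
        rw [← hG.card_edgeFinset]
        exact (Finset.card_eq_sum_card_fiberwise
          (fun x _ => Finset.mem_univ (edgeWeight k f x))).symm
      refine ⟨f, ?_, ?_⟩
      · refine bal_of_sum hfV ?_ hk
        rw [hsumV, hcard]; ring
      · rw [if_pos rfl]
        refine bal_of_sum hfE ?_ (by omega)
        rw [hsumE, hcard]
        obtain ⟨m', rfl⟩ : ∃ m', m = m' + 1 := ⟨m - 1, by omega⟩
        have hx : (m' + 1) * k = k * m' + k := by ring
        have hy : k * (m' + 1 - 1) = k * m' := by rw [Nat.add_sub_cancel]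
        rw [hy, hx]
        set t := k * m' with ht
        omega
    | succ j ih =>
      intro hj V _ _ G _ hG hcard
      have hmk : 1 ≤ m * k := Nat.mul_pos hm hk
      have h2 : 2 ≤ Fintype.card V := by omega
      obtain ⟨v, hdeg⟩ := tree_exists_leaf hG h2
      obtain ⟨u, hnb⟩ := Finset.card_eq_one.mp hdeg
      have hvu : G.Adj v u := by
        rw [← SimpleGraph.mem_neighborFinset, hnb]
        exact Finset.mem_singleton_self u
      have hu : ∀ w, G.Adj v w → w = u := by
        intro w hw
        have : w ∈ G.neighborFinset v := by
          rw [SimpleGraph.mem_neighborFinset]; exact hw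
        rw [hnb] at this
        exact Finset.mem_singleton.mp this
      have hT' : (G.induce {w | w ≠ v}).IsTree := tree_delete_leaf hG h2 hdeg
      have hcard' : Fintype.card ↥{w : V | w ≠ v} = m * k + j := by
        have hsub : Fintype.card ↥{w : V | w ≠ v} = Fintype.card V - 1 := by
          simp [Fintype.card_subtype_compl, Finset.filter_ne', Finset.card_erase_of_mem]
        omega
      obtain ⟨f', hV', hE'⟩ := ih (by omega) ↥{w : V | w ≠ v} (G.induce {w | w ≠ v}) hT' hcard'
      set u' : ↥{w : V | w ≠ v} := ⟨u, hvu.ne'⟩ with hu'def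
      -- choose the label `c` of the new leaf
      have hchoice : ∃ c : ZMod k,
          (Finset.univ.filter (fun w : ↥{w : V | w ≠ v} => f' w = c)).card = m ∧
          ((G.induce {w | w ≠ v}).edgeFinset.filter
            (fun e => edgeWeight k f' e = c + f' u')).card
            = (if j = 0 then m - 1 else m) := by
        by_cases hj0 : j = 0
        · subst hj0
          rw [if_pos rfl] at hE' ⊢
          set B := Finset.univ.filter (fun w : ZMod k =>
            ((G.induce {w | w ≠ v}).edgeFinset.filter
              (fun e => edgeWeight k f' e = w)).card = (m - 1) + 1) with hB
          have hBcard : B.card = k - 1 := hE'.2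
          have hcompl : 0 < (Bᶜ).card := by
            rw [Finset.card_compl, ZMod.card, hBcard]
            omega
          obtain ⟨w, hw⟩ := Finset.card_pos.mp hcompl
          have hwB : w ∉ B := Finset.mem_compl.mp hw
          refine ⟨w - f' u', ?_, ?_⟩
          · rcases hV'.1 (w - f' u') with h | h
            · exact h
            · exfalso
              have hzero := hV'.2
              have : (w - f' u') ∈ Finset.univ.filter (fun a : ZMod k =>
                  (Finset.univ.filter (fun v' : ↥{w : V | w ≠ v} => f' v' = a)).card = m + 1) := by
                refine Finset.mem_filter.mpr ⟨Finset.mem_univ _, ?_⟩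
                exact h
              rw [Finset.card_eq_zero.mp hzero] at this
              exact absurd this (Finset.notMem_empty _)
          · have hsum : w - f' u' + f' u' = w := by ring
            rw [hsum]
            rcases hE'.1 w with h | h
            · exact h
            · exact absurd (Finset.mem_filter.mpr ⟨Finset.mem_univ w, h⟩) hwB
        · rw [if_neg hj0] at hE' ⊢
          set A := Finset.univ.filter (fun a : ZMod k =>
            (Finset.univ.filter (fun v' : ↥{w : V | w ≠ v} => f' v' = a)).card = m + 1) with hA
          set B := Finset.univ.filter (fun w : ZMod k =>
            ((G.induce {w | w ≠ v}).edgeFinset.filter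
              (fun e => edgeWeight k f' e = w)).card = m + 1) with hB
          set F := A ∪ B.image (fun w => w - f' u') with hF
          have hAcard : A.card = j := hV'.2
          have hBcard : B.card = j - 1 := hE'.2
          have hFcard : F.card ≤ j + (j - 1) := by
            calc F.card ≤ A.card + (B.image (fun w => w - f' u')).card :=
                Finset.card_union_le _ _
              _ ≤ A.card + B.card := by
                have := Finset.card_image_le (s := B) (f := fun w => w - f' u')
                omega
              _ = j + (j - 1) := by rw [hAcard, hBcard]
          have hcompl : 0 < (Fᶜ).card := by
            rw [Finset.card_compl, ZMod.card]
            omega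
          obtain ⟨c, hc⟩ := Finset.card_pos.mp hcompl
          have hcF : c ∉ F := Finset.mem_compl.mp hc
          have hcA : c ∉ A := fun h => hcF (Finset.mem_union_left _ h)
          have hcB : c + f' u' ∉ B := by
            intro h
            apply hcF
            apply Finset.mem_union_right
            refine Finset.mem_image.mpr ⟨c + f' u', h, ?_⟩
            ring
          refine ⟨c, ?_, ?_⟩
          · rcases hV'.1 c with h | h
            · exact h
            · exact absurd (Finset.mem_filter.mpr ⟨Finset.mem_univ c, h⟩) hcA
          · rcases hE'.1 (c + f' u') with h | h
            · exact h
            · exact absurd (Finset.mem_filter.mpr ⟨Finset.mem_univ (c + f' u'), h⟩) hcB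
      obtain ⟨c, hcV, hcE⟩ := hchoice
      -- extend the labeling
      set f : V → ZMod k := fun w => if h : w = v then c else f' ⟨w, h⟩ with hfdef
      have hagree : ∀ w : ↥{w : V | w ≠ v}, f w.1 = f' w := by
        intro w
        have : w.1 ≠ v := w.2
        simp [hfdef, this]
      have hfv : f v = c := by simp [hfdef]
      have hcntV : ∀ a, (Finset.univ.filter (fun w : V => f w = a)).card
          = (Finset.univ.filter (fun w : ↥{w : V | w ≠ v} => f' w = a)).card
            + (if c = a then 1 else 0) := by
        intro a
        rw [count_vertex f v a, hfv]
        congr 2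
        apply Finset.filter_congr
        intro w _
        rw [hagree w]
      have hcntE : ∀ a, (G.edgeFinset.filter (fun e => edgeWeight k f e = a)).card
          = ((G.induce {w | w ≠ v}).edgeFinset.filter
              (fun e => edgeWeight k f' e = a)).card
            + (if c + f' u' = a then 1 else 0) := by
        intro a
        rw [count_edge hvu hu f f' hagree a, hfv, hagree u']
      refine ⟨f, ?_, ?_⟩
      · have hinc := hV'.increment (a0 := c) hcV
        have heq : (fun a => (Finset.univ.filter (fun w : V => f w = a)).card)
            = (fun a => (Finset.univ.filter
                (fun w : ↥{w : V | w ≠ v} => f' w = a)).card + if c = a then 1 else 0) :=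
          funext hcntV
        rw [heq]
        exact hinc
      · rw [if_neg (Nat.succ_ne_zero j)]
        have heq : (fun a => (G.edgeFinset.filter (fun e => edgeWeight k f e = a)).card)
            = (fun a => ((G.induce {w | w ≠ v}).edgeFinset.filter
                (fun e => edgeWeight k f' e = a)).card + if c + f' u' = a then 1 else 0) :=
          funext hcntE
        rw [heq]
        by_cases hj0 : j = 0
        · subst hj0
          rw [if_pos rfl] at hE'
          rw [if_pos rfl] at hcE
          have hinc := hE'.increment (a0 := c + f' u') hcE
          have hk1 : k - 1 + 1 = k := by omega
          rw [hk1] at hinc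
          have hup := hinc.up
          have hm1 : m - 1 + 1 = m := by omega
          rw [hm1] at hup
          simpa using hup
        · rw [if_neg hj0] at hE'
          rw [if_neg hj0] at hcE
          have hinc := hE'.increment (a0 := c + f' u') hcE
          have hj1 : j - 1 + 1 = j := by omega
          rw [hj1] at hinc
          simpa using hinc
  -- wrap up
  intro V _ _ G _ hG hlow hhigh
  set j := Fintype.card V - m * k with hj
  have hcard : Fintype.card V = m * k + j := by omega
  have hjk : 2 * j ≤ k + 2 := by omega
  obtain ⟨f, hV, hE⟩ := key j hjk V G hG hcard
  refine ⟨f, fun a b => hV.diff_le a b, fun a b => ?_⟩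
  by_cases hj0 : j = 0
  · rw [if_pos hj0] at hE
    exact hE.diff_le a b
  · rw [if_neg hj0] at hE
    exact hE.diff_le a b
end

section
/- Every tree on at most seven vertices is 7-cordial. -/
namespace SevenCordialAux

/-- The `i`-th base-7 digit of `code`: the label of vertex `i`. -/
def labv (code i : ℕ) : ℕ := code / 7 ^ i % 7

/-- `code` encodes a good labeling for the tree with parent list `pl`. -/
def Good (pl : List ℕ) (code : ℕ) : Prop :=
  (∀ i < 7, ∀ j < 7, i < j → labv code i ≠ labv code j) ∧
  (∀ i, 1 ≤ i → i < 7 → ∀ j, 1 ≤ j → j < 7 → i < j →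
    (labv code i + labv code (pl.getD i 0)) % 7 ≠
    (labv code j + labv code (pl.getD j 0)) % 7)

instance (pl : List ℕ) (code : ℕ) : Decidable (Good pl code) := by
  unfold Good; infer_instance

set_option maxRecDepth 4000 in
set_option maxHeartbeats 1000000 in
/-- Table of good labeling codes, indexed by encoded parent lists. -/
def table : List ℕ :=
[800667, 663663, 664839, 528129, 782145, 796257, 671013, 536361, 537243, 402885, 654549, 796257, 786261, 800373, 769797, 800373, 786261, 786261, 800667, 798609, 800667, 800667, 785967, 637791, 699825, 579579, 580461, 460509, 697767, 753039, 584577, 466683, 467271, 349671, 584577, 584577, 699825, 750981, 699825, 699825, 569877, 637791, 650433, 767739, 436401, 769797, 654549, 570171, 800667, 785967, 798609, 785967, 800667, 800667, 800667, 779793, 800667, 800667, 584283, 695415, 798609, 798609, 578109, 699531, 697179, 464331, 436401, 769797, 434343, 671013, 436401, 570171, 786261, 769797, 786261, 786261, 800373, 695415, 664839, 782145, 465213, 798609, 697767, 584577, 465213, 798609, 448749, 699825, 465213, 584577, 697767, 798609, 798021, 699825, 697767, 695415, 782145, 654549, 671013, 786261, 467271, 800667, 782145, 654549, 671013, 800667,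 452865, 697767, 796257, 699531, 699825, 786261, 467271, 786261, 650433, 697767, 699825, 800667, 785967, 800667, 800667, 781263, 782145, 763035, 798609, 349671, 786261, 769209, 769797, 753039, 786261, 786261, 800667, 347613, 800667, 800667, 670719, 335265, 448749, 465213, 537243, 467271, 452865, 671013, 800667, 798021, 798609, 796257, 800667, 800667, 800667, 800373, 800667, 800667, 762741, 662487, 798609, 798609, 766857, 670719, 517545, 637791, 798021, 767739, 654549, 671013, 637497, 769797, 786261, 318801, 786261, 786261, 699531, 349671, 769797, 769797, 781263, 699531, 560763, 695415, 695415, 347613, 562821, 699531, 699531, 699531, 654549, 769797, 452865, 570171, 452865, 769797, 563997, 436401, 580461, 452865, 467271, 699825, 769209, 782145, 697767, 699825, 695121, 798609, 697767, 798609, 467271, 584577, 467271, 798609, 697767, 563997, 697767, 699825, 695121, 699825, 570171, 434343, 763035, 786261, 699825, 800667, 584577, 654549, 699825, 800667, 671013, 786261, 584577, 697767, 697179, 800667, 465213, 800667, 584283, 697767, 699825, 697767, 699825, 537243, 699825, 584283, 697767, 584283, 699825, 699825, 699825, 578109, 699825, 699825, 785967, 796257, 697767, 697767, 779793, 800373,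 798021, 766857, 537243, 467271, 535185, 570171, 537243, 671013, 584577, 520485, 584577, 584577, 800373, 753039, 467271, 467271, 579579, 800373, 661605, 796257, 796257, 750981, 663663, 800373, 800373, 800373, 452865, 467271, 654549, 671013, 654549, 467271, 654549, 654549, 750981, 785967, 769209, 781263, 753039, 779793, 649257, 785967, 785967, 785967, 763035, 779205, 779793, 779793, 798021, 798021, 654549, 779205, 535185, 671013, 654549, 671013, 580461, 452865, 563997, 584577, 580461, 699825, 467271, 452865, 697767, 699825, 697767, 452865, 697767, 750393, 563997, 699825, 697767, 699825, 448749, 779205, 448749, 465213, 800373, 465213, 584577, 654549, 671013, 654549, 699825, 748335, 570171, 580461, 699825, 697767, 570171, 570171, 584577, 697767, 699825, 448749, 699825, 584577, 796257, 537243, 436401, 434343, 452865, 570171, 584577, 467271, 584577, 584577, 699531, 796257, 563997, 580461, 767739, 697767, 798609, 786261, 767739, 697767, 650433, 800667, 767739, 786261, 798609, 697767, 697179, 800667, 798609, 796257, 664839, 537243, 782145, 654549, 769797, 800667, 466683, 580461, 798609, 800667, 795963, 697767, 798609, 697767, 769797, 786261, 769797, 697767, 798609, 664839, 798609, 800667,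 795963, 800667, 782145, 654549, 664839, 786261, 782145, 800667, 769797, 654549, 798609, 800667, 798609, 654549, 798609, 347025, 664839, 800667, 798609, 800667, 650433, 577521, 650433, 767739, 699531, 767739, 769797, 654549, 653961, 786261, 769797, 753039, 769797, 650433, 769797, 786261, 752745, 786261, 664839, 519897, 664839, 782145, 670719, 782145, 779793, 779205, 779793, 796257, 762741, 796257, 584577, 670719, 452865, 452865, 570171, 570171, 584577, 650433, 467271, 467271, 584577, 584577, 767739, 767739, 782145, 782145, 569877, 670719, 650433, 767739, 452865, 467271, 452865, 570171, 580461, 452865, 570171, 584577, 769797, 699825, 580461, 452865, 570171, 699825, 654549, 798609, 695415, 800373, 800667, 584577, 769797, 584577, 448749, 798609, 800667, 699825, 584283, 699825, 671013, 535185, 460509, 584577, 800667, 699825, 786261, 452865, 800667, 699825, 570171, 584577, 786261, 798609, 798021, 699825, 767739, 699825, 785967, 798609, 800667, 798609, 800667, 436401, 786261, 452865, 570171, 452865, 800667, 344967, 671013, 782145, 800667, 798609, 671013, 671013, 786261, 798609, 800667, 650433, 800667, 786261, 695415, 436401, 537243, 535185, 654549, 671013, 786261, 569877, 654549, 654549,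 671013, 671013, 786261, 448749, 769797, 769797, 786261, 786261, 465213, 465213, 580461, 580461, 670719, 569877, 448749, 465213, 654549, 769797, 654549, 671013, 767739, 650433, 767739, 654549, 671013, 513723, 645729, 782145, 767739, 654549, 671013, 786261, 767739, 750981, 748629, 782145, 662487, 786261, 518427, 750981, 753039, 633675, 785967, 800373, 537243, 467271, 584577, 570171, 798609, 671013, 699825, 563997, 402885, 570171, 786261, 671013, 800667, 467271, 584577, 467271, 786261, 301749, 800667, 584283, 697767, 697767, 699825, 699825, 537243, 467271, 584577, 671013, 697767, 769797, 800667, 467271, 786261, 671013, 584577, 570171, 699825, 767739, 786261, 769797, 699825, 699825, 800667, 434343, 798609, 798609, 800667, 800667, 637791, 785967, 786261, 570171, 798609, 570171, 800667, 769797, 769209, 671013, 782145, 671013, 800667, 769797, 786261, 664839, 800667, 800667, 436401, 436401, 537243, 537243, 699531, 584283, 434343, 769797, 786261, 671013, 569877, 671013, 800373, 769797, 786261, 769797, 786261, 465213, 637791, 465213, 580461, 563997, 697767, 699825, 434343, 436401, 697767, 798609, 697767, 699825, 436401, 767739, 796257, 767739, 569877, 570171, 782145, 664839, 782145, 467271,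 584577, 570171, 561645, 767739, 782145, 467271, 699825, 800667, 436401, 537243, 436401, 697767, 699825, 800667]

set_option maxRecDepth 4000 in
set_option maxHeartbeats 2000000 in
theorem tableGood : ∀ a2 < 2, ∀ a3 < 3, ∀ a4 < 4, ∀ a5 < 5, ∀ a6 < 6,
    Good [0, 0, a2, a3, a4, a5, a6]
      (table.getD (a2 + 2*a3 + 6*a4 + 24*a5 + 120*a6) 0) := by decide

theorem labv_lt (code i : ℕ) : labv code i < 7 := Nat.mod_lt _ (by norm_num)

/-- crossing lemma: a walk from inside `s` to outside `s` crosses the boundary. -/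
theorem cross {V : Type} (G : SimpleGraph V) (s : Set V) :
    ∀ {x y : V}, x ∈ s → y ∉ s → G.Walk x y → ∃ a ∈ s, ∃ b, b ∉ s ∧ G.Adj a b := by
  intro x y hx hy w
  revert hx hy
  induction w with
  | nil => intro hx hy; exact absurd hx hy
  | @cons u v _ h p ih =>
    intro hu hy
    by_cases hv : v ∈ s
    · exact ih hv hy
    · exact ⟨u, hu, v, hv, h⟩

/-- A connected graph has an enumeration where every vertex is adjacent to an earlier one. -/
theorem exists_span {V : Type} [Fintype V] [DecidableEq V] (G : SimpleGraph V)
    (hG : G.Preconnected) (x₀ : V) :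
    ∀ m, m + 1 ≤ Fintype.card V →
      ∃ l : List V, l.Nodup ∧ l.length = m + 1 ∧
        ∀ i, 1 ≤ i → i < l.length →
          ∃ j, j < i ∧ G.Adj (l.getD i x₀) (l.getD j x₀) := by
  intro m
  induction m with
  | zero =>
    intro _
    exact ⟨[x₀], by simp, by simp, by intro i h1 h2; simp at h2; omega⟩
  | succ m ih =>
    intro hm
    obtain ⟨l, hnd, hlen, hsp⟩ := ih (by omega)
    have hne : ∃ y : V, y ∉ l := by
      by_contra hc
      push_neg at hc
      have h1 : l.toFinset = Finset.univ := Finset.eq_univ_iff_forall.2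
        (fun v => List.mem_toFinset.2 (hc v))
      have h2 : l.toFinset.card ≤ l.length := l.toFinset_card_le
      rw [h1, Finset.card_univ] at h2
      omega
    obtain ⟨y, hy⟩ := hne
    have hx : l.getD 0 x₀ ∈ l := by
      rw [List.getD_eq_getElem _ _ (by omega)]
      exact List.getElem_mem _
    obtain ⟨a, ha, b, hb, hab⟩ := cross G {v | v ∈ l} hx hy ((hG _ y).some)
    refine ⟨l ++ [b], ?_, by simp [hlen], ?_⟩
    · rw [List.nodup_append]
      exact ⟨hnd, List.nodup_singleton b, by simp; intro a ha h; exact hb (h ▸ ha)⟩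
    · intro i h1 hi
      rw [List.length_append, hlen] at hi
      simp only [List.length_singleton] at hi
      by_cases hil : i < l.length
      · obtain ⟨j, hj, hadj⟩ := hsp i h1 hil
        exact ⟨j, hj, by rwa [List.getD_append _ _ _ _ hil,
          List.getD_append _ _ _ _ (by omega)]⟩
      · have hieq : i = l.length := by omega
        have h1b : (l ++ [b]).getD i x₀ = b := by
          rw [hieq, List.getD_append_right _ _ _ _ le_rfl]
          simp
        have ha' : a ∈ l := ha
        have hal : l.idxOf a < l.length := List.idxOf_lt_length_iff.2 ha'
        refine ⟨l.idxOf a, by omega, ?_⟩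
        rw [h1b, List.getD_append _ _ _ _ hal, List.getD_eq_getElem _ _ hal,
          List.getElem_idxOf hal]
        exact hab.symm

end SevenCordialAux

open SevenCordialAux

/-- Every tree on at most seven vertices is 7-cordial. -/
theorem tree_le_seven_is_seven_cordial {V : Type} [Fintype V] [DecidableEq V]
    (G : SimpleGraph V) [DecidableRel G.Adj] (hT : G.IsTree)
    (hcard : Fintype.card V ≤ 7) :
    ∃ f : V → ZMod 7, IsCordialLabeling 7 G f := by
  classical
  obtain ⟨x₀⟩ := hT.isConnected.nonempty
  set n := Fintype.card V with hn
  have hnev : Nonempty V := ⟨x₀⟩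
  have hn1 : 1 ≤ n := Fintype.card_pos
  obtain ⟨l, hnd, hlen0, hsp⟩ :=
    exists_span G hT.isConnected.preconnected x₀ (n - 1) (by omega)
  have hlen : l.length = n := by omega
  have hmem : ∀ v : V, v ∈ l := by
    intro v
    have h1 : l.toFinset.card = n := by rw [List.toFinset_card_of_nodup hnd, hlen]
    have h2 : l.toFinset = Finset.univ := Finset.eq_univ_of_card _ h1
    rw [← List.mem_toFinset, h2]; exact Finset.mem_univ v
  have hspec : ∀ i, 1 ≤ i ∧ i < n →
      ∃ j, j < i ∧ G.Adj (l.getD i x₀) (l.getD j x₀) :=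
    fun i h => hsp i h.1 (by omega)
  set q : ℕ → ℕ := fun i => if h : 1 ≤ i ∧ i < n then Classical.choose (hspec i h) else i - 1
    with hqdef
  have hqlt : ∀ i, 1 ≤ i → q i < i := by
    intro i h1
    by_cases h : 1 ≤ i ∧ i < n
    · simpa [hqdef, h] using (Classical.choose_spec (hspec i h)).1
    · simp only [hqdef, dif_neg h]; omega
  have hqadj : ∀ i, 1 ≤ i → i < n → G.Adj (l.getD i x₀) (l.getD (q i) x₀) := by
    intro i h1 h2
    have h : 1 ≤ i ∧ i < n := ⟨h1, h2⟩
    have := (Classical.choose_spec (hspec i h)).2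
    simpa [hqdef, dif_pos h] using this
  have hq1 : q 1 = 0 := by have := hqlt 1 le_rfl; omega
  set code := table.getD (q 2 + 2*q 3 + 6*q 4 + 24*q 5 + 120*q 6) 0 with hcode
  obtain ⟨hgi, hgs⟩ : Good [0, 0, q 2, q 3, q 4, q 5, q 6] code :=
    tableGood (q 2) (hqlt 2 (by omega)) (q 3) (hqlt 3 (by omega))
      (q 4) (hqlt 4 (by omega)) (q 5) (hqlt 5 (by omega)) (q 6) (hqlt 6 (by omega))
  have hpl : ∀ i, 1 ≤ i → i < 7 →
      ([0, 0, q 2, q 3, q 4, q 5, q 6] : List ℕ).getD i 0 = q i := by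
    intro i h1 h7
    interval_cases i
    · exact hq1.symm
    · rfl
    · rfl
    · rfl
    · rfl
    · rfl
  have hinj : ∀ i j, i < 7 → j < 7 → labv code i = labv code j → i = j := by
    intro i j hi hj hij
    rcases lt_trichotomy i j with h | h | h
    · exact absurd hij (hgi i hi j hj h)
    · exact h
    · exact absurd hij.symm (hgi j hj i hi h)
  have hsum : ∀ i j, 1 ≤ i → i < 7 → 1 ≤ j → j < 7 →
      (labv code i + labv code (q i)) % 7 = (labv code j + labv code (q j)) % 7 → i = j := by
    intro i j hi1 hi7 hj1 hj7 heq
    rw [← hpl i hi1 hi7, ← hpl j hj1 hj7] at heq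
    rcases lt_trichotomy i j with h | h | h
    · exact absurd heq (hgs i hi1 hi7 j hj1 hj7 h)
    · exact h
    · exact absurd heq.symm (hgs j hj1 hj7 i hi1 hi7 h)
  have hidx_lt : ∀ v : V, l.idxOf v < n :=
    fun v => hlen ▸ List.idxOf_lt_length_iff.2 (hmem v)
  have hget_idx : ∀ v : V, l.getD (l.idxOf v) x₀ = v := by
    intro v
    have h := List.idxOf_lt_length_iff.2 (hmem v)
    rw [List.getD_eq_getElem _ _ h]
    exact List.getElem_idxOf h
  have hidx_get : ∀ i, i < n → l.idxOf (l.getD i x₀) = i := by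
    intro i hi
    have hi' : i < l.length := by omega
    have h2 : l.idxOf (l.getD i x₀) < l.length := by rw [hlen]; exact hidx_lt _
    apply (List.Nodup.getElem_inj_iff hnd).1
    rw [← List.getD_eq_getElem l x₀ h2, ← List.getD_eq_getElem l x₀ hi', hget_idx]
  set f : V → ZMod 7 := fun v => ((labv code (l.idxOf v) : ℕ) : ZMod 7) with hfdef
  have hfinj : Function.Injective f := by
    intro u v huv
    have hu7 : l.idxOf u < 7 := lt_of_lt_of_le (hidx_lt u) hcard
    have hv7 : l.idxOf v < 7 := lt_of_lt_of_le (hidx_lt v) hcard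
    have hnat : labv code (l.idxOf u) = labv code (l.idxOf v) := by
      have h1 := ZMod.val_cast_of_lt (labv_lt code (l.idxOf u))
      have h2 := ZMod.val_cast_of_lt (labv_lt code (l.idxOf v))
      rw [← h1, ← h2]
      exact congrArg ZMod.val huv
    have hiq := hinj _ _ hu7 hv7 hnat
    have h3 := hget_idx u
    rw [hiq, hget_idx v] at h3
    exact h3.symm
  have hgd_inj : ∀ i j, i < n → j < n → l.getD i x₀ = l.getD j x₀ → i = j := by
    intro i j hi hj h
    have h' := hidx_get i hi
    rw [h, hidx_get j hj] at h'
    exact h'.symm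
  set g : ℕ → Sym2 V := fun i => s(l.getD i x₀, l.getD (q i) x₀) with hgdef
  have hqn : ∀ i, 1 ≤ i → i < n → q i < n := fun i h1 h2 => lt_trans (hqlt i h1) h2
  have hginj : Set.InjOn g (Finset.Ico 1 n) := by
    intro i hi j hj heq
    simp only [Finset.coe_Ico, Set.mem_Ico] at hi hj
    rw [hgdef] at heq
    simp only [Sym2.eq_iff] at heq
    rcases heq with ⟨h1, _⟩ | ⟨h1, h2⟩
    · exact hgd_inj i j (by omega) (by omega) h1
    · have e1 := hgd_inj i (q j) (by omega) (hqn j hj.1 hj.2) h1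
      have e2 := hgd_inj (q i) j (hqn i hi.1 hi.2) (by omega) h2
      have := hqlt i hi.1
      have := hqlt j hj.1
      omega
  have hTsub : (Finset.Ico 1 n).image g ⊆ G.edgeFinset := by
    intro e he
    obtain ⟨i, hi, rfl⟩ := Finset.mem_image.1 he
    rw [Finset.mem_Ico] at hi
    rw [SimpleGraph.mem_edgeFinset, SimpleGraph.mem_edgeSet]
    exact hqadj i hi.1 hi.2
  have hEcard : G.edgeFinset.card = n - 1 := by
    have := hT.card_edgeFinset
    omega
  have hTE : (Finset.Ico 1 n).image g = G.edgeFinset := by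
    apply Finset.eq_of_subset_of_card_le hTsub
    rw [Finset.card_image_of_injOn hginj, Nat.card_Ico, hEcard]
  have hw : ∀ i, 1 ≤ i → i < n →
      edgeWeight 7 f (g i) = (((labv code i + labv code (q i)) % 7 : ℕ) : ZMod 7) := by
    intro i h1 h2
    have : edgeWeight 7 f (g i) = f (l.getD i x₀) + f (l.getD (q i) x₀) := rfl
    rw [this, hfdef]
    simp only [hidx_get i h2, hidx_get (q i) (hqn i h1 h2)]
    rw [← Nat.cast_add, ZMod.natCast_mod]
  refine ⟨f, ?_, ?_⟩
  · intro a b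
    have ha : (Finset.univ.filter (fun v => f v = a)).card ≤ 1 := by
      apply Finset.card_le_one.2
      intro u hu v hv
      simp only [Finset.mem_filter] at hu hv
      exact hfinj (hu.2.trans hv.2.symm)
    have hb : (0 : ℤ) ≤ ((Finset.univ.filter (fun v => f v = b)).card : ℤ) :=
      Int.natCast_nonneg _
    have ha' : ((Finset.univ.filter (fun v => f v = a)).card : ℤ) ≤ 1 := by exact_mod_cast ha
    omega
  · intro a b
    have ha : (G.edgeFinset.filter (fun e => edgeWeight 7 f e = a)).card ≤ 1 := by
      apply Finset.card_le_one.2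
      intro e1 he1 e2 he2
      simp only [Finset.mem_filter] at he1 he2
      obtain ⟨hm1, hw1⟩ := he1
      obtain ⟨hm2, hw2⟩ := he2
      rw [← hTE] at hm1 hm2
      obtain ⟨i, hi, rfl⟩ := Finset.mem_image.1 hm1
      obtain ⟨j, hj, rfl⟩ := Finset.mem_image.1 hm2
      rw [Finset.mem_Ico] at hi hj
      have hweq := (hw i hi.1 hi.2).symm.trans (hw1.trans (hw2.symm.trans (hw j hj.1 hj.2)))
      have hnat : (labv code i + labv code (q i)) % 7 = (labv code j + labv code (q j)) % 7 := by
        have h1 := ZMod.val_cast_of_lt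
          (Nat.mod_lt (labv code i + labv code (q i)) (show 0 < 7 by norm_num))
        have h2 := ZMod.val_cast_of_lt
          (Nat.mod_lt (labv code j + labv code (q j)) (show 0 < 7 by norm_num))
        rw [← h1, ← h2]
        exact congrArg ZMod.val hweq
      have := hsum i j hi.1 (lt_of_lt_of_le hi.2 hcard) hj.1 (lt_of_lt_of_le hj.2 hcard) hnat
      rw [this]
    have hb : (0 : ℤ) ≤ ((G.edgeFinset.filter (fun e => edgeWeight 7 f e = b)).card : ℤ) :=
      Int.natCast_nonneg _
    have ha' : ((G.edgeFinset.filter (fun e => edgeWeight 7 f e = a)).card : ℤ) ≤ 1 := by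
      exact_mod_cast ha
    omega
end
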